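/- For binary increasing trees of size n, the number of trees whose min-path has exactly 2 nodes equals the (n-1)-st Euler number e_{n-1}; equivalently, the first column (m = 2) of the table of |res_{n,m}| consists of the Euler numbers 1, 1, 1, 2, 5, 16, 61, 272, 1385, .... -/

import Mathlib

namespace Andre

/-- Plane binary trees with natural-number labels; `nil` is the empty tree. -/
inductive PTree where
  | nil : PTree
  | node (lab : ℕ) (l r : PTree) : PTree
deriving DecidableEq

namespace PTree

def size : PTree → ℕ
  | nil => 0
  | node _ l r => l.size + r.size + 1

def labels : PTree → Finset ℕ
  | nil => ∅
  | node a l r => insert a (l.labels ∪ r.labels)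

def rootLabel : PTree → ℕ
  | nil => 0
  | node a _ _ => a

def Increasing : PTree → Prop
  | nil => True
  | node a l r => (∀ b ∈ l.labels, a < b) ∧ (∀ b ∈ r.labels, a < b) ∧ l.Increasing ∧ r.Increasing

/-- `t` is a binary increasing tree on the label set {1,…,n}. -/
def IsBIT (n : ℕ) (t : PTree) : Prop :=
  t.Increasing ∧ t.size = n ∧ t.labels = Finset.Icc 1 n

/-- standard drawing (a1),(a2): an only child is on the right, and of two
children the one with the smaller label is on the left. -/
def StdOriented : PTree → Prop
  | nil => True
  | node _ l r => (r = nil → l = nil) ∧ (l ≠ nil → r ≠ nil → l.rootLabel < r.rootLabel)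
      ∧ l.StdOriented ∧ r.StdOriented

/-- left-oriented drawing: an only child is on the left, and of two
children the one with the smaller label is on the left. -/
def LeftOriented : PTree → Prop
  | nil => True
  | node _ l r => (l = nil → r = nil) ∧ (l ≠ nil → r ≠ nil → l.rootLabel < r.rootLabel)
      ∧ l.LeftOriented ∧ r.LeftOriented

/-- strictly binary: no node has outdegree one. -/
def Strict : PTree → Prop
  | nil => True
  | node _ l r => (l = nil ↔ r = nil) ∧ l.Strict ∧ r.Strict

/-- the collapsing procedure φ: repeatedly collapsing leaves into their parents
produces exactly the in-order reading word of the plane-drawn tree. -/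
def phi : PTree → List ℕ
  | nil => []
  | node a l r => phi l ++ a :: phi r

/-- `Sim t t'` means `t` and `t'` are two plane drawings of the same
(unordered) labelled tree. -/
inductive Sim : PTree → PTree → Prop
  | nil : Sim nil nil
  | node {a : ℕ} {l r l' r' : PTree} : Sim l l' → Sim r r' → Sim (node a l r) (node a l' r')
  | swap {a : ℕ} {l r l' r' : PTree} : Sim l r' → Sim r l' → Sim (node a l r) (node a l' r')

/-- number of nodes of outdegree 0. -/
def leaves : PTree → ℕ
  | nil => 0
  | node _ nil nil => 1
  | node _ l r => l.leaves + r.leaves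

/-- number of nodes of outdegree 1. -/
def deg1 : PTree → ℕ
  | nil => 0
  | node _ nil nil => 0
  | node _ nil r => 1 + r.deg1
  | node _ l nil => 1 + l.deg1
  | node _ l r => l.deg1 + r.deg1

/-- number of nodes of outdegree 2. -/
def deg2 : PTree → ℕ
  | nil => 0
  | node _ nil nil => 0
  | node _ nil r => r.deg2
  | node _ l nil => l.deg2
  | node _ l r => 1 + l.deg2 + r.deg2

/-- length of the min-path: start from the root and at each step move to the
child with the least label. -/
def minPathLen : PTree → ℕ
  | nil => 0
  | node _ nil nil => 1
  | node _ nil r => 1 + r.minPathLen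
  | node _ l nil => 1 + l.minPathLen
  | node _ l r => 1 + (if l.rootLabel ≤ r.rootLabel then l.minPathLen else r.minPathLen)

/-- set of labels on the min-path. -/
def minPathLabels : PTree → Finset ℕ
  | nil => ∅
  | node a nil nil => {a}
  | node a nil r => insert a r.minPathLabels
  | node a l nil => insert a l.minPathLabels
  | node a l r => insert a (if l.rootLabel ≤ r.rootLabel then l.minPathLabels else r.minPathLabels)

/-- length of the max-path: start from the root and, while the current node
has outdegree two, move to the child with the larger label. -/
def maxPathLen : PTree → ℕ
  | nil => 0
  | node _ nil _ => 1
  | node _ _ nil => 1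
  | node _ l r => 1 + (if l.rootLabel ≤ r.rootLabel then r.maxPathLen else l.maxPathLen)

/-- set of labels on the max-path. -/
def maxPathLabels : PTree → Finset ℕ
  | nil => ∅
  | node a nil _ => {a}
  | node a _ nil => {a}
  | node a l r => insert a (if l.rootLabel ≤ r.rootLabel then r.maxPathLabels else l.maxPathLabels)

/-- labels on the path from the root to the leftmost leaf. -/
def leftmostPathLabels : PTree → Finset ℕ
  | nil => ∅
  | node a nil nil => {a}
  | node a nil r => insert a r.leftmostPathLabels
  | node a l _ => insert a l.leftmostPathLabels

/-- labels of nodes reachable from the root by performing only right steps. -/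
def rightSpineLabels : PTree → Finset ℕ
  | nil => ∅
  | node a _ r => insert a r.rightSpineLabels

end PTree

/-- left-to-right minima of a word. -/
def leftToRightMinima (l : List ℕ) : Set ℕ :=
  {x | ∃ i : Fin l.length, l.get i = x ∧ ∀ j : Fin l.length, (j : ℕ) < (i : ℕ) → x < l.get j}

/-- right-to-left minima of a word. -/
def rightToLeftMinima (l : List ℕ) : Set ℕ :=
  {x | ∃ i : Fin l.length, l.get i = x ∧ ∀ j : Fin l.length, (i : ℕ) < (j : ℕ) → x < l.get j}

/-- a word is up-down (alternating): l₀ < l₁ > l₂ < l₃ > ⋯ . -/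
def IsUpDown (l : List ℕ) : Prop :=
  ∀ i : ℕ, i + 1 < l.length →
    (i % 2 = 0 → l.getD i 0 < l.getD (i + 1) 0) ∧ (i % 2 = 1 → l.getD (i + 1) 0 < l.getD i 0)

/-- the n-th Euler number: the number of up-down (alternating) permutations of {1,…,n}. -/
noncomputable def eulerNumber (n : ℕ) : ℕ :=
  {l : List ℕ | l.Perm (List.range' 1 n) ∧ IsUpDown l}.ncard

/-- the Euler numbers as indexed in the paper: e₁ = e₂ = e₃ = 1, e₄ = 2, e₅ = 5, e₆ = 16, … -/
noncomputable def paperEuler (n : ℕ) : ℕ := eulerNumber (n - 1)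

/-- the number of binary increasing trees of size n (each counted once, via its
unique standard drawing). -/
noncomputable def treeCount (n : ℕ) : ℕ :=
  {t : PTree | PTree.IsBIT n t ∧ PTree.StdOriented t}.ncard

/-- number of binary increasing trees of size n whose min-path has m nodes. -/
noncomputable def minPathCount (n m : ℕ) : ℕ :=
  {t : PTree | PTree.IsBIT n t ∧ PTree.StdOriented t ∧ t.minPathLen = m}.ncard

/-- number of binary increasing trees of size n whose max-path has r nodes. -/
noncomputable def maxPathCount (n r : ℕ) : ℕ :=
  {t : PTree | PTree.IsBIT n t ∧ PTree.StdOriented t ∧ t.maxPathLen = r}.ncard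

/-- σ is a restriction of π: σ is obtained from π by keeping only the entries 1,…,k. -/
def IsRestriction (σ π : List ℕ) : Prop :=
  ∃ k, 1 ≤ k ∧ k ≤ π.length ∧ σ = π.filter (fun x => decide (x ≤ k))

/-- σ ∈ res_n(Ã): σ has size n and is a restriction of an André permutation of
the second kind associated with a strictly binary increasing tree. -/
def InRes (n : ℕ) (σ : List ℕ) : Prop :=
  σ.length = n ∧
  ∃ (m : ℕ) (t : PTree), PTree.IsBIT m t ∧ PTree.StdOriented t ∧ PTree.Strict t ∧
    IsRestriction σ (PTree.phi t)

/-- outdegree of the node labelled v in t (0 if absent). -/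
def outdeg (v : ℕ) : PTree → ℕ
  | PTree.nil => 0
  | PTree.node a l r =>
      (if a = v then (if l = PTree.nil then 0 else 1) + (if r = PTree.nil then 0 else 1) else 0)
      + outdeg v l + outdeg v r

/-- the construction Θ: attach a new node labelled `newLab` as a child of the node
labelled `v`, redrawing in the standard way. -/
def addNode (v newLab : ℕ) : PTree → PTree
  | PTree.nil => PTree.nil
  | PTree.node a l r =>
      if a = v then
        match l, r with
        | PTree.nil, PTree.nil =>
            PTree.node a PTree.nil (PTree.node newLab PTree.nil PTree.nil)
        | PTree.nil, c => PTree.node a c (PTree.node newLab PTree.nil PTree.nil)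
        | c, PTree.nil => PTree.node a c (PTree.node newLab PTree.nil PTree.nil)
        | _, _ => PTree.node a l r
      else PTree.node a (addNode v newLab l) (addNode v newLab r)


/-- down-up words. -/
def IsDownUp (l : List ℕ) : Prop :=
  ∀ i : ℕ, i + 1 < l.length →
    (i % 2 = 1 → l.getD i 0 < l.getD (i + 1) 0) ∧ (i % 2 = 0 → l.getD (i + 1) 0 < l.getD i 0)

lemma isUpDown_nil : IsUpDown [] := by intro i hi; simp at hi

lemma isDownUp_nil : IsDownUp [] := by intro i hi; simp at hi

lemma isUpDown_singleton (x : ℕ) : IsUpDown [x] := by intro i hi; simp at hi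

/-- Key splitting lemma: if `x` is smaller than everything in `u` and `v`, then
`u ++ x :: v` is up-down iff `u` is up-down of even length and `v` is down-up. -/
lemma isUpDown_append_cons {u v : List ℕ} {x : ℕ}
    (hu : ∀ y ∈ u, x < y) (hv : ∀ y ∈ v, x < y) :
    IsUpDown (u ++ x :: v) ↔ Even u.length ∧ IsUpDown u ∧ IsDownUp v := by
  set n := u.length with hn
  have hlen : (u ++ x :: v).length = n + 1 + v.length := by simp [hn]; omega
  have hgu : ∀ i (h : i < n), (u ++ x :: v).getD i 0 = u.getD i 0 := fun i h =>
    List.getD_append _ _ _ _ h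
  have hgx : (u ++ x :: v).getD n 0 = x := by
    rw [List.getD_append_right _ _ _ _ (le_refl n)]; simp [hn]
  have hgv : ∀ j, (u ++ x :: v).getD (n + 1 + j) 0 = v.getD j 0 := by
    intro j
    rw [List.getD_append_right _ _ _ _ (by omega : n ≤ n + 1 + j)]
    have : n + 1 + j - n = j + 1 := by omega
    rw [this]; simp
  constructor
  · intro h
    have heven : Even n := by
      by_contra hodd
      have hodd' : n % 2 = 1 := Nat.not_even_iff.mp hodd
      have h1 : 1 ≤ n := by omega
      have hi : (n - 1) + 1 < (u ++ x :: v).length := by omega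
      have hpar : (n - 1) % 2 = 0 := by omega
      have := (h (n - 1) hi).1 hpar
      rw [hgu _ (by omega), (by omega : n - 1 + 1 = n), hgx] at this
      have hm : u.getD (n-1) 0 ∈ u := by
        rw [List.getD_eq_getElem u 0 (by omega)]; exact List.getElem_mem _
      exact absurd this (not_lt.2 (le_of_lt (hu _ hm)))
    refine ⟨heven, ?_, ?_⟩
    · intro i hi
      have h2 := h i (by omega)
      rw [hgu i (by omega), hgu (i+1) (by omega)] at h2
      exact h2
    · intro j hj
      have h2 := h (n + 1 + j) (by rw [hlen]; omega)
      rw [hgv j, (by omega : n + 1 + j + 1 = n + 1 + (j+1)), hgv (j+1)] at h2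
      obtain ⟨k, hk⟩ := heven
      exact ⟨fun hp => h2.1 (by omega), fun hp => h2.2 (by omega)⟩
  · rintro ⟨hev, h1, h2⟩ i hi
    obtain ⟨k, hk⟩ := hev
    rw [hlen] at hi
    rcases lt_trichotomy (i+1) n with hc | hc | hc
    · have := h1 i (by omega)
      rw [hgu i (by omega), hgu (i+1) (by omega)]
      exact this
    · -- i + 1 = n
      have hi' : i = n - 1 := by omega
      have hpar : i % 2 = 1 := by omega
      constructor
      · intro hp; omega
      · intro _
        rw [hgu i (by omega), (by omega : i + 1 = n), hgx]
        apply hu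
        rw [List.getD_eq_getElem u 0 (by omega)]; exact List.getElem_mem _
    · rcases Nat.lt_or_ge i (n+1) with hc2 | hc2
      · -- i = n
        have hi' : i = n := by omega
        subst hi'
        constructor
        · intro _
          rw [hgx, (by omega : n + 1 = n + 1 + 0), hgv 0]
          apply hv
          rw [List.getD_eq_getElem v 0 (by omega)]; exact List.getElem_mem _
        · intro hp; omega
      · -- i ≥ n + 1
        obtain ⟨j, hj⟩ : ∃ j, i = n + 1 + j := ⟨i - n - 1, by omega⟩
        subst hj
        have := h2 j (by omega)
        rw [hgv j, (by omega : n + 1 + j + 1 = n + 1 + (j+1)), hgv (j+1)]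
        exact ⟨fun hp => this.1 (by omega), fun hp => this.2 (by omega)⟩

lemma getD_map (f : ℕ → ℕ) (l : List ℕ) (i : ℕ) (h : i < l.length) :
    (l.map f).getD i 0 = f (l.getD i 0) := by
  rw [List.getD_eq_getElem _ 0 (by simpa using h), List.getD_eq_getElem l 0 h]
  exact List.getElem_map f

lemma isUpDown_map_of_mono {f : ℕ → ℕ} {l : List ℕ}
    (hf : ∀ a ∈ l, ∀ b ∈ l, a < b → f a < f b) (h : IsUpDown l) : IsUpDown (l.map f) := by
  intro i hi
  rw [List.length_map] at hi
  have hmem : ∀ j (h : j < l.length), l.getD j 0 ∈ l := fun j hj => by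
    rw [List.getD_eq_getElem l 0 hj]; exact List.getElem_mem _
  have := h i hi
  rw [getD_map f l i (by omega), getD_map f l (i+1) (by omega)]
  exact ⟨fun hp => hf _ (hmem i (by omega)) _ (hmem (i+1) (by omega)) (this.1 hp),
    fun hp => hf _ (hmem (i+1) (by omega)) _ (hmem i (by omega)) (this.2 hp)⟩

lemma isDownUp_map_of_mono {f : ℕ → ℕ} {l : List ℕ}
    (hf : ∀ a ∈ l, ∀ b ∈ l, a < b → f a < f b) (h : IsDownUp l) : IsDownUp (l.map f) := by
  intro i hi
  rw [List.length_map] at hi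
  have hmem : ∀ j (h : j < l.length), l.getD j 0 ∈ l := fun j hj => by
    rw [List.getD_eq_getElem l 0 hj]; exact List.getElem_mem _
  have := h i hi
  rw [getD_map f l i (by omega), getD_map f l (i+1) (by omega)]
  exact ⟨fun hp => hf _ (hmem i (by omega)) _ (hmem (i+1) (by omega)) (this.1 hp),
    fun hp => hf _ (hmem (i+1) (by omega)) _ (hmem i (by omega)) (this.2 hp)⟩

lemma isDownUp_map_of_anti {f : ℕ → ℕ} {l : List ℕ}
    (hf : ∀ a ∈ l, ∀ b ∈ l, a < b → f b < f a) (h : IsUpDown l) : IsDownUp (l.map f) := by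
  intro i hi
  rw [List.length_map] at hi
  have hmem : ∀ j (h : j < l.length), l.getD j 0 ∈ l := fun j hj => by
    rw [List.getD_eq_getElem l 0 hj]; exact List.getElem_mem _
  have := h i hi
  rw [getD_map f l i (by omega), getD_map f l (i+1) (by omega)]
  exact ⟨fun hp => hf _ (hmem (i+1) (by omega)) _ (hmem i (by omega)) (this.2 hp),
    fun hp => hf _ (hmem i (by omega)) _ (hmem (i+1) (by omega)) (this.1 hp)⟩

lemma isUpDown_map_of_anti {f : ℕ → ℕ} {l : List ℕ}
    (hf : ∀ a ∈ l, ∀ b ∈ l, a < b → f b < f a) (h : IsDownUp l) : IsUpDown (l.map f) := by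
  intro i hi
  rw [List.length_map] at hi
  have hmem : ∀ j (h : j < l.length), l.getD j 0 ∈ l := fun j hj => by
    rw [List.getD_eq_getElem l 0 hj]; exact List.getElem_mem _
  have := h i hi
  rw [getD_map f l i (by omega), getD_map f l (i+1) (by omega)]
  exact ⟨fun hp => hf _ (hmem (i+1) (by omega)) _ (hmem i (by omega)) (this.2 hp),
    fun hp => hf _ (hmem i (by omega)) _ (hmem (i+1) (by omega)) (this.1 hp)⟩

/-- unique splitting at a distinguished letter not in the prefixes -/
lemma append_cons_inj {x : ℕ} : ∀ {u u' v v' : List ℕ}, x ∉ u → x ∉ u' →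
    u ++ x :: v = u' ++ x :: v' → u = u' ∧ v = v' := by
  intro u u' v v' hu hu' h
  induction u generalizing u' with
  | nil =>
    cases u' with
    | nil => simpa using h
    | cons a u' =>
      simp at h
      exact absurd (h.1 ▸ (List.mem_cons_self (a := a) (l := u'))) (by simpa [h.1] using hu')
  | cons a u ih =>
    cases u' with
    | nil =>
      simp at h
      exact absurd (h.1 ▸ (List.mem_cons_self (a := a) (l := u))) (by simpa [h.1] using hu)
    | cons b u' =>
      simp at h
      obtain ⟨rfl, h2⟩ := h
      have := ih (fun hm => hu (List.mem_cons_of_mem _ hm))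
        (fun hm => hu' (List.mem_cons_of_mem _ hm)) h2
      exact ⟨by rw [this.1], this.2⟩


/-! ### Counting up-down words on a finite label set -/

def perms (S : Finset ℕ) : Set (List ℕ) := {l | l.Nodup ∧ l.toFinset = S}

lemma perms_finite (S : Finset ℕ) : (perms S).Finite := by
  apply Set.Finite.subset (((S.sort (· ≤ ·)).permutations.toFinset : Finset (List ℕ)).finite_toSet)
  intro l hl
  simp only [Finset.coe_sort_coe, Finset.mem_coe, List.mem_toFinset, List.mem_permutations]
  exact List.perm_of_nodup_nodup_toFinset_eq hl.1 (Finset.sort_nodup _ _)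
    (by rw [hl.2, Finset.sort_toFinset])

lemma perms_length {S : Finset ℕ} {l : List ℕ} (hl : l ∈ perms S) : l.length = S.card := by
  rw [← hl.2, List.toFinset_card_of_nodup hl.1]

lemma perms_mem {S : Finset ℕ} {l : List ℕ} (hl : l ∈ perms S) {x : ℕ} (hx : x ∈ l) : x ∈ S := by
  rw [← hl.2]; exact List.mem_toFinset.2 hx

noncomputable def udCount (S : Finset ℕ) : ℕ := {l | l ∈ perms S ∧ IsUpDown l}.ncard
noncomputable def duCount (S : Finset ℕ) : ℕ := {l | l ∈ perms S ∧ IsDownUp l}.ncard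

lemma map_inj_of_injOn {f : ℕ → ℕ} {S : Finset ℕ}
    (hinj : ∀ a ∈ S, ∀ b ∈ S, f a = f b → a = b) :
    ∀ {l l' : List ℕ}, (∀ x ∈ l, x ∈ S) → (∀ x ∈ l', x ∈ S) → l.map f = l'.map f → l = l' := by
  intro l
  induction l with
  | nil => intro l' _ _ h; cases l' <;> simp_all
  | cons a l ih =>
    intro l' hl hl' h
    cases l' with
    | nil => simp at h
    | cons b l' =>
      simp only [List.map_cons, List.cons.injEq] at h
      have hab : a = b := hinj a (hl a (by simp)) b (hl' b (by simp)) h.1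
      rw [hab, ih (fun x hx => hl x (by simp [hx])) (fun x hx => hl' x (by simp [hx])) h.2]

lemma permsCount_le {S S' : Finset ℕ} {P Q : List ℕ → Prop} (f : ℕ → ℕ)
    (hmaps : ∀ x ∈ S, f x ∈ S') (hinj : ∀ a ∈ S, ∀ b ∈ S, f a = f b → a = b)
    (hsurj : ∀ y ∈ S', ∃ x ∈ S, f x = y)
    (hPQ : ∀ l, l ∈ perms S → P l → Q (l.map f)) :
    {l | l ∈ perms S ∧ P l}.ncard ≤ {l | l ∈ perms S' ∧ Q l}.ncard := by
  have himage : (List.map f) '' {l | l ∈ perms S ∧ P l} ⊆ {l | l ∈ perms S' ∧ Q l} := by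
    rintro _ ⟨l, ⟨hp, hP⟩, rfl⟩
    refine ⟨⟨?_, ?_⟩, hPQ l hp hP⟩
    · exact List.Nodup.map_on
        (fun x hx y hy hxy => hinj x (perms_mem hp hx) y (perms_mem hp hy) hxy) hp.1
    · ext y
      simp only [List.mem_toFinset, List.mem_map]
      constructor
      · rintro ⟨x, hx, rfl⟩; exact hmaps x (perms_mem hp hx)
      · intro hy
        obtain ⟨x, hxS, rfl⟩ := hsurj y hy
        exact ⟨x, by rw [← List.mem_toFinset, hp.2]; exact hxS, rfl⟩
  calc {l | l ∈ perms S ∧ P l}.ncard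
      = ((List.map f) '' {l | l ∈ perms S ∧ P l}).ncard := by
        refine (Set.ncard_image_of_injOn ?_).symm
        intro l hl l' hl' h
        exact map_inj_of_injOn hinj (fun x hx => perms_mem hl.1 hx)
          (fun x hx => perms_mem hl'.1 hx) h
    _ ≤ {l | l ∈ perms S' ∧ Q l}.ncard := by
        refine Set.ncard_le_ncard himage ?_
        exact Set.Finite.subset (perms_finite S') (fun l hl => hl.1)

/-- order preserving transfer function between two finsets of equal cardinality -/
noncomputable def trf (S S' : Finset ℕ) (h : S.card = S'.card) : ℕ → ℕ :=
  fun x => if hx : x ∈ S then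
    ((S'.orderIsoOfFin rfl) (Fin.cast h ((S.orderIsoOfFin rfl).symm ⟨x, hx⟩)) : ℕ) else 0

lemma trf_maps {S S' : Finset ℕ} (h : S.card = S'.card) : ∀ x ∈ S, trf S S' h x ∈ S' := by
  intro x hx; rw [trf, dif_pos hx]; exact Finset.coe_mem _

lemma trf_strictMono {S S' : Finset ℕ} (h : S.card = S'.card) :
    ∀ a ∈ S, ∀ b ∈ S, a < b → trf S S' h a < trf S S' h b := by
  intro a ha b hb hab
  simp only [trf]
  rw [dif_pos ha, dif_pos hb]
  have h1 : (⟨a, ha⟩ : {x // x ∈ S}) < ⟨b, hb⟩ := hab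
  have h2 := (OrderIso.lt_iff_lt (S.orderIsoOfFin rfl).symm).mpr h1
  exact (OrderIso.lt_iff_lt (S'.orderIsoOfFin rfl)).mpr (by exact h2)

lemma trf_surj {S S' : Finset ℕ} (h : S.card = S'.card) :
    ∀ y ∈ S', ∃ x ∈ S, trf S S' h x = y := by
  intro y hy
  set i : Fin S.card := Fin.cast h.symm ((S'.orderIsoOfFin rfl).symm ⟨y, hy⟩) with hi
  refine ⟨(S.orderIsoOfFin rfl i : ℕ), Finset.coe_mem _, ?_⟩
  simp only [trf]
  rw [dif_pos (Finset.coe_mem _)]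
  have h2 : (S.orderIsoOfFin rfl).symm ⟨(S.orderIsoOfFin rfl i : ℕ), Finset.coe_mem _⟩ = i := by
    rw [show (⟨((S.orderIsoOfFin rfl) i : ℕ), Finset.coe_mem _⟩ : {x // x ∈ S})
      = (S.orderIsoOfFin rfl) i from Subtype.ext rfl, OrderIso.symm_apply_apply]
  rw [h2, hi]
  simp

/-- order reversing transfer function between two finsets of equal cardinality -/
noncomputable def trfR (S S' : Finset ℕ) (h : S.card = S'.card) : ℕ → ℕ :=
  fun x => if hx : x ∈ S then
    ((S'.orderIsoOfFin rfl) (Fin.rev (Fin.cast h ((S.orderIsoOfFin rfl).symm ⟨x, hx⟩))) : ℕ) else 0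

lemma trfR_maps {S S' : Finset ℕ} (h : S.card = S'.card) : ∀ x ∈ S, trfR S S' h x ∈ S' := by
  intro x hx; rw [trfR, dif_pos hx]; exact Finset.coe_mem _

lemma trfR_strictAnti {S S' : Finset ℕ} (h : S.card = S'.card) :
    ∀ a ∈ S, ∀ b ∈ S, a < b → trfR S S' h b < trfR S S' h a := by
  intro a ha b hb hab
  simp only [trfR]
  rw [dif_pos ha, dif_pos hb]
  have h1 : (⟨a, ha⟩ : {x // x ∈ S}) < ⟨b, hb⟩ := hab
  have h2 := (OrderIso.lt_iff_lt (S.orderIsoOfFin rfl).symm).mpr h1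
  have h3 : Fin.rev (Fin.cast h ((S.orderIsoOfFin rfl).symm ⟨b, hb⟩))
      < Fin.rev (Fin.cast h ((S.orderIsoOfFin rfl).symm ⟨a, ha⟩)) := by
    rw [Fin.rev_lt_rev]
    exact h2
  exact (OrderIso.lt_iff_lt (S'.orderIsoOfFin rfl)).mpr h3

lemma trfR_surj {S S' : Finset ℕ} (h : S.card = S'.card) :
    ∀ y ∈ S', ∃ x ∈ S, trfR S S' h x = y := by
  intro y hy
  set i : Fin S.card := Fin.cast h.symm (Fin.rev ((S'.orderIsoOfFin rfl).symm ⟨y, hy⟩)) with hi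
  refine ⟨(S.orderIsoOfFin rfl i : ℕ), Finset.coe_mem _, ?_⟩
  simp only [trfR]
  rw [dif_pos (Finset.coe_mem _)]
  have h2 : (S.orderIsoOfFin rfl).symm ⟨(S.orderIsoOfFin rfl i : ℕ), Finset.coe_mem _⟩ = i := by
    rw [show (⟨((S.orderIsoOfFin rfl) i : ℕ), Finset.coe_mem _⟩ : {x // x ∈ S})
      = (S.orderIsoOfFin rfl) i from Subtype.ext rfl, OrderIso.symm_apply_apply]
  rw [h2, hi]
  simp

lemma trf_inj {S S' : Finset ℕ} (h : S.card = S'.card) :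
    ∀ a ∈ S, ∀ b ∈ S, trf S S' h a = trf S S' h b → a = b := by
  intro a ha b hb hfe
  rcases lt_trichotomy a b with hc | hc | hc
  · exact absurd hfe (ne_of_lt (trf_strictMono h a ha b hb hc))
  · exact hc
  · exact absurd hfe.symm (ne_of_lt (trf_strictMono h b hb a ha hc))

lemma trfR_inj {S S' : Finset ℕ} (h : S.card = S'.card) :
    ∀ a ∈ S, ∀ b ∈ S, trfR S S' h a = trfR S S' h b → a = b := by
  intro a ha b hb hfe
  rcases lt_trichotomy a b with hc | hc | hc
  · exact absurd hfe.symm (ne_of_lt (trfR_strictAnti h a ha b hb hc))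
  · exact hc
  · exact absurd hfe (ne_of_lt (trfR_strictAnti h b hb a ha hc))

lemma udCount_eq_of_card_eq {S S' : Finset ℕ} (h : S.card = S'.card) : udCount S = udCount S' := by
  apply le_antisymm
  · exact permsCount_le (trf S S' h) (trf_maps h) (trf_inj h) (trf_surj h)
      (fun l hl hUD => isUpDown_map_of_mono
        (fun a ha b hb => trf_strictMono h a (perms_mem hl ha) b (perms_mem hl hb)) hUD)
  · exact permsCount_le (trf S' S h.symm) (trf_maps h.symm) (trf_inj h.symm) (trf_surj h.symm)
      (fun l hl hUD => isUpDown_map_of_mono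
        (fun a ha b hb => trf_strictMono h.symm a (perms_mem hl ha) b (perms_mem hl hb)) hUD)

lemma duCount_eq_udCount (S : Finset ℕ) : duCount S = udCount S := by
  apply le_antisymm
  · exact permsCount_le (trfR S S rfl) (trfR_maps rfl) (trfR_inj rfl) (trfR_surj rfl)
      (fun l hl hDU => isUpDown_map_of_anti
        (fun a ha b hb => trfR_strictAnti rfl a (perms_mem hl ha) b (perms_mem hl hb)) hDU)
  · exact permsCount_le (trfR S S rfl) (trfR_maps rfl) (trfR_inj rfl) (trfR_surj rfl)
      (fun l hl hUD => isDownUp_map_of_anti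
        (fun a ha b hb => trfR_strictAnti rfl a (perms_mem hl ha) b (perms_mem hl hb)) hUD)

/-! ### ncard helpers -/

lemma ncard_prod {α β : Type*} (s : Set α) (t : Set β) (hs : s.Finite) (ht : t.Finite) :
    (s ×ˢ t).ncard = s.ncard * t.ncard := by
  rw [Set.ncard_eq_toFinset_card _ (hs.prod ht), ← Set.Finite.toFinset_prod hs ht,
    Finset.card_product, ← Set.ncard_eq_toFinset_card _ hs, ← Set.ncard_eq_toFinset_card _ ht]

lemma ncard_biUnion {α β : Type*} (F : Finset α) (B : α → Set β)
    (hfin : ∀ a ∈ F, (B a).Finite)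
    (hdisj : ∀ a ∈ F, ∀ b ∈ F, a ≠ b → Disjoint (B a) (B b)) :
    (⋃ a ∈ F, B a).ncard = ∑ a ∈ F, (B a).ncard := by
  classical
  induction F using Finset.induction_on with
  | empty => simp
  | insert a s hx ih =>
    rw [Finset.sum_insert hx]
    have hrw : (⋃ b ∈ insert a s, B b) = B a ∪ ⋃ b ∈ s, B b := by simp
    rw [hrw, Set.ncard_union_eq ?_ (hfin a (by simp)) ?_, ih (fun b hb => hfin b (by simp [hb]))
      (fun b hb c hc hbc => hdisj b (by simp [hb]) c (by simp [hc]) hbc)]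
    · refine Set.disjoint_iUnion₂_right.mpr fun b hb => ?_
      have hb' : b ∈ s := by exact_mod_cast hb
      exact hdisj a (by simp) b (by simp [hb']) (fun h => hx (h ▸ hb'))
    · exact Set.Finite.biUnion s.finite_toSet (fun b hb => hfin b (by
        simp only [Finset.mem_insert]; right; exact_mod_cast hb))

lemma card_Icc_one (m : ℕ) : (Finset.Icc 1 m).card = m := by
  rw [Nat.card_Icc]; omega

/-! ### the recurrence for up-down counts -/

lemma udCount_zero : udCount (Finset.Icc 1 0) = 1 := by
  have : {l | l ∈ perms (Finset.Icc 1 0) ∧ IsUpDown l} = {([] : List ℕ)} := by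
    ext l
    simp only [Set.mem_setOf_eq, Set.mem_singleton_iff]
    constructor
    · rintro ⟨⟨hnd, htf⟩, _⟩
      cases l with
      | nil => rfl
      | cons a l =>
        exfalso
        have : a ∈ Finset.Icc 1 0 := by rw [← htf]; simp
        simp at this
    · rintro rfl
      exact ⟨⟨List.nodup_nil, by simp⟩, isUpDown_nil⟩
  rw [udCount, this, Set.ncard_singleton]

lemma udCount_rec (n : ℕ) :
    udCount (Finset.Icc 1 (n+1)) = ∑ k ∈ Finset.range (n+1),
      if Even k then n.choose k * udCount (Finset.Icc 1 k) * udCount (Finset.Icc 1 (n-k)) else 0 := by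
  classical
  set T : Finset ℕ := Finset.Icc 2 (n+1) with hT
  have hTcard : T.card = n := by rw [hT, Nat.card_Icc]; omega
  have hmemT : ∀ x, x ∈ T ↔ (x ∈ Finset.Icc 1 (n+1) ∧ x ≠ 1) := by
    intro x; rw [hT]; simp only [Finset.mem_Icc]; omega
  set F : Finset (Finset ℕ) := T.powerset.filter (fun A => Even A.card) with hF
  set Block : Finset ℕ → Set (List ℕ) := fun A =>
    (fun p : List ℕ × List ℕ => p.1 ++ 1 :: p.2) ''
      (({u | u ∈ perms A ∧ IsUpDown u}) ×ˢ ({v | v ∈ perms (T \ A) ∧ IsDownUp v})) with hBlock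
  -- block finiteness
  have hBfin : ∀ A, (Block A).Finite := by
    intro A
    apply Set.Finite.image
    exact Set.Finite.prod (Set.Finite.subset (perms_finite A) (fun l hl => hl.1))
      (Set.Finite.subset (perms_finite (T \ A)) (fun l hl => hl.1))
  -- the set equality
  have hset : {l | l ∈ perms (Finset.Icc 1 (n+1)) ∧ IsUpDown l} = ⋃ A ∈ F, Block A := by
    ext l
    simp only [Set.mem_setOf_eq, Set.mem_iUnion, exists_prop]
    constructor
    · rintro ⟨⟨hnd, htf⟩, hUD⟩
      have h1l : (1 : ℕ) ∈ l := by
        rw [← List.mem_toFinset, htf]; simp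
      obtain ⟨u, v, rfl⟩ := List.append_of_mem h1l
      rw [List.nodup_append'] at hnd
      obtain ⟨hund, hcons, hdis⟩ := hnd
      have h1v : (1:ℕ) ∉ v := (List.nodup_cons.1 hcons).1
      have hvnd : v.Nodup := (List.nodup_cons.1 hcons).2
      have h1u : (1:ℕ) ∉ u := fun h => hdis h ((List.mem_cons_self (a := 1) (l := v)))
      have hmem : ∀ x ∈ u ++ 1 :: v, x ∈ Finset.Icc 1 (n+1) := by
        intro x hx; rw [← htf]; exact List.mem_toFinset.2 hx
      have hugt : ∀ y ∈ u, 1 < y := by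
        intro y hy
        have := hmem y (by simp [hy])
        simp only [Finset.mem_Icc] at this
        have : 1 ≤ y := this.1
        rcases this.lt_or_eq with h | h
        · exact h
        · exact absurd (h ▸ hy) h1u
      have hvgt : ∀ y ∈ v, 1 < y := by
        intro y hy
        have h2 := hmem y (by simp [hy])
        simp only [Finset.mem_Icc] at h2
        rcases h2.1.lt_or_eq with h | h
        · exact h
        · exact absurd (h ▸ hy) h1v
      obtain ⟨hEv, hUDu, hDUv⟩ := (isUpDown_append_cons hugt hvgt).1 hUD
      refine ⟨u.toFinset, ?_, ?_⟩
      · rw [hF, Finset.mem_filter, Finset.mem_powerset]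
        constructor
        · intro x hx
          rw [hmemT]
          have hxu := List.mem_toFinset.1 hx
          exact ⟨hmem x (by simp [hxu]), fun h => h1u (h ▸ hxu)⟩
        · rwa [List.toFinset_card_of_nodup hund]
      · rw [hBlock]
        refine ⟨(u, v), ⟨⟨⟨hund, rfl⟩, hUDu⟩, ⟨⟨hvnd, ?_⟩, hDUv⟩⟩, rfl⟩
        ext x
        simp only [List.mem_toFinset, Finset.mem_sdiff]
        constructor
        · intro hx
          refine ⟨(hmemT x).2 ⟨hmem x (by simp [hx]), fun h => h1v (h ▸ hx)⟩, ?_⟩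
          intro hxu
          exact hdis hxu (List.mem_cons_of_mem _ hx)
        · rintro ⟨hxT, hxu⟩
          have hx2 := (hmemT x).1 hxT
          have : x ∈ u ++ 1 :: v := by rw [← List.mem_toFinset, htf]; exact hx2.1
          rcases List.mem_append.1 this with h | h
          · exact absurd h hxu
          · rcases List.mem_cons.1 h with h | h
            · exact absurd h hx2.2
            · exact h
    · rintro ⟨A, hAF, hl⟩
      rw [hF, Finset.mem_filter, Finset.mem_powerset] at hAF
      obtain ⟨hAT, hAev⟩ := hAF
      rw [hBlock] at hl
      obtain ⟨⟨u, v⟩, ⟨⟨⟨hund, hutf⟩, hUDu⟩, ⟨⟨hvnd, hvtf⟩, hDUv⟩⟩, rfl⟩ := hl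
      have humem : ∀ x ∈ u, x ∈ T := fun x hx => hAT (hutf ▸ List.mem_toFinset.2 hx)
      have hvmem : ∀ x ∈ v, x ∈ T \ A := fun x hx => hvtf ▸ List.mem_toFinset.2 hx
      have hugt : ∀ y ∈ u, 1 < y := by
        intro y hy
        have := (hmemT y).1 (humem y hy)
        simp only [Finset.mem_Icc] at this
        omega
      have hvgt : ∀ y ∈ v, 1 < y := by
        intro y hy
        have := (hmemT y).1 (Finset.mem_sdiff.1 (hvmem y hy)).1
        simp only [Finset.mem_Icc] at this
        omega
      refine ⟨⟨?_, ?_⟩, ?_⟩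
      · rw [List.nodup_append']
        refine ⟨hund, List.nodup_cons.2 ⟨fun h => absurd (hvgt 1 h) (by omega), hvnd⟩, ?_⟩
        intro x hxu hxv
        rcases List.mem_cons.1 hxv with h | h
        · rw [h] at hxu
          exact absurd (hugt 1 hxu) (lt_irrefl 1)
        · exact (Finset.mem_sdiff.1 (hvmem x h)).2 (hutf ▸ List.mem_toFinset.2 hxu)
      · ext x
        simp only [List.mem_toFinset, List.mem_append, List.mem_cons]
        constructor
        · rintro (h | h | h)
          · exact ((hmemT x).1 (humem x h)).1
          · subst h; simp
          · exact ((hmemT x).1 (Finset.mem_sdiff.1 (hvmem x h)).1).1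
        · intro hx
          by_cases hx1 : x = 1
          · right; left; exact hx1
          · have hxT : x ∈ T := (hmemT x).2 ⟨hx, hx1⟩
            by_cases hxA : x ∈ A
            · left; rw [← List.mem_toFinset, hutf]; exact hxA
            · right; right; rw [← List.mem_toFinset, hvtf]; exact Finset.mem_sdiff.2 ⟨hxT, hxA⟩
      · refine (isUpDown_append_cons hugt hvgt).2 ⟨?_, hUDu, hDUv⟩
        rw [← hutf, List.toFinset_card_of_nodup hund] at hAev
        exact hAev
  -- disjointness of blocks
  have hBdisj : ∀ A ∈ F, ∀ A' ∈ F, A ≠ A' → Disjoint (Block A) (Block A') := by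
    intro A hA A' hA' hne
    rw [Set.disjoint_left]
    rintro l hl hl'
    rw [hF, Finset.mem_filter, Finset.mem_powerset] at hA hA'
    rw [hBlock] at hl hl'
    obtain ⟨⟨u, v⟩, ⟨⟨⟨hund, hutf⟩, _⟩, _⟩, rfl⟩ := hl
    obtain ⟨⟨u', v'⟩, ⟨⟨⟨hund', hutf'⟩, _⟩, _⟩, heq⟩ := hl'
    have h1u : (1:ℕ) ∉ u := by
      intro h
      have := (hmemT 1).1 (hA.1 (hutf ▸ List.mem_toFinset.2 h))
      exact this.2 rfl
    have h1u' : (1:ℕ) ∉ u' := by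
      intro h
      have := (hmemT 1).1 (hA'.1 (hutf' ▸ List.mem_toFinset.2 h))
      exact this.2 rfl
    obtain ⟨hu, hv⟩ := append_cons_inj h1u' h1u heq
    exact hne (by rw [← hutf, ← hutf', hu])
  -- block cardinality
  have hBcard : ∀ A ∈ F, (Block A).ncard = udCount A * duCount (T \ A) := by
    intro A hA
    rw [hF, Finset.mem_filter, Finset.mem_powerset] at hA
    rw [hBlock]
    have hinj : Set.InjOn (fun p : List ℕ × List ℕ => p.1 ++ 1 :: p.2)
        (({u | u ∈ perms A ∧ IsUpDown u}) ×ˢ ({v | v ∈ perms (T \ A) ∧ IsDownUp v})) := by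
      rintro ⟨u, v⟩ ⟨⟨⟨hund, hutf⟩, _⟩, _⟩ ⟨u', v'⟩ ⟨⟨⟨hund', hutf'⟩, _⟩, _⟩ heq
      have h1u : (1:ℕ) ∉ u := by
        intro h
        exact ((hmemT 1).1 (hA.1 (hutf ▸ List.mem_toFinset.2 h))).2 rfl
      have h1u' : (1:ℕ) ∉ u' := by
        intro h
        exact ((hmemT 1).1 (hA.1 (hutf' ▸ List.mem_toFinset.2 h))).2 rfl
      obtain ⟨hu, hv⟩ := append_cons_inj h1u h1u' heq
      exact Prod.ext hu hv
    rw [Set.ncard_image_of_injOn hinj, ncard_prod _ _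
      (Set.Finite.subset (perms_finite A) (fun l hl => hl.1))
      (Set.Finite.subset (perms_finite (T \ A)) (fun l hl => hl.1))]
    rfl
  -- put it together
  rw [udCount, hset, ncard_biUnion F Block (fun A _ => hBfin A) hBdisj]
  have hstep : ∀ A ∈ F, (Block A).ncard =
      udCount (Finset.Icc 1 A.card) * udCount (Finset.Icc 1 (n - A.card)) := by
    intro A hA
    have hA' := hA
    rw [hF, Finset.mem_filter, Finset.mem_powerset] at hA'
    have e1 : A.card = (Finset.Icc 1 A.card).card := (card_Icc_one A.card).symm
    have e2 : (T \ A).card = (Finset.Icc 1 (n - A.card)).card := by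
      rw [Finset.card_sdiff_of_subset hA'.1, hTcard, card_Icc_one]
    rw [hBcard A hA, udCount_eq_of_card_eq e1, duCount_eq_udCount (T \ A),
      udCount_eq_of_card_eq e2]
  rw [Finset.sum_congr rfl hstep]
  rw [hF, Finset.sum_filter]
  have : ∀ A ∈ T.powerset, (if Even A.card then
      udCount (Finset.Icc 1 A.card) * udCount (Finset.Icc 1 (n - A.card)) else 0)
      = (fun k => if Even k then udCount (Finset.Icc 1 k) * udCount (Finset.Icc 1 (n-k)) else 0) A.card := by
    intro A _; rfl
  rw [Finset.sum_congr rfl this, Finset.sum_powerset]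
  rw [hTcard]
  refine Finset.sum_congr rfl ?_
  intro j hj
  rw [Finset.sum_powersetCard j T (fun k => if Even k then
    udCount (Finset.Icc 1 k) * udCount (Finset.Icc 1 (n-k)) else 0), hTcard]
  by_cases hje : Even j
  · rw [if_pos hje, if_pos hje, smul_eq_mul, mul_assoc]
  · rw [if_neg hje, if_neg hje, smul_zero]

/-! ### deriving the second recurrence via formal power series -/

section Star

open PowerSeries

private lemma fact_ne (n : ℕ) : (n.factorial : ℚ) ≠ 0 := by
  exact_mod_cast Nat.factorial_ne_zero n

lemma star_of_rec (e : ℕ → ℕ) (h0 : e 0 = 1)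
    (hrec : ∀ n, e (n+1) = ∑ k ∈ Finset.range (n+1),
      if Even k then (n.choose k) * e k * e (n-k) else 0) :
    ∀ M, e (M+2) = ∑ i ∈ Finset.range (M+1), (M.choose i) * e (i+1) * e (M-i) := by
  set a : ℕ → ℚ := fun n => e n / n.factorial with ha
  set A : PowerSeries ℚ := PowerSeries.mk a with hA
  set Cs : PowerSeries ℚ := PowerSeries.mk (fun n => if Even n then a n else 0) with hCs
  set Ss : PowerSeries ℚ := PowerSeries.mk (fun n => if Even n then 0 else a n) with hSs
  have hsplit : A = Cs + Ss := by
    ext n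
    rw [hA, hCs, hSs, map_add, coeff_mk, coeff_mk, coeff_mk]
    by_cases hn : Even n <;> simp [hn]
  have hterm : ∀ n k, k ≤ n → ((n.choose k : ℚ) * e k * e (n-k)) / n.factorial
      = a k * a (n - k) := by
    intro n k hk
    have hfac : (n.factorial : ℚ) = (n.choose k : ℚ) * k.factorial * (n-k).factorial := by
      exact_mod_cast (Nat.choose_mul_factorial_mul_factorial hk).symm
    have hch : (n.choose k : ℚ) ≠ 0 := by
      exact_mod_cast Nat.choose_pos hk |>.ne'
    rw [ha]
    field_simp [hfac]
    rw [hfac]; ring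
  have hCA : d⁄dX ℚ A = Cs * A := by
    ext n
    rw [coeff_derivative, PowerSeries.coeff_mul, Finset.Nat.sum_antidiagonal_eq_sum_range_succ_mk]
    simp only [hA, hCs, coeff_mk]
    have hLHS : a (n+1) * ((n:ℚ)+1) = (e (n+1) : ℚ) / n.factorial := by
      rw [ha]
      simp only [Nat.factorial_succ]
      push_cast
      rw [div_mul_eq_mul_div]
      rw [div_eq_div_iff (by positivity) (fact_ne n)]
      ring
    rw [hLHS]
    have hRHS : ∀ k ∈ Finset.range (n+1),
        (if Even k then a k else 0) * a (n - k)
        = (if Even k then ((n.choose k : ℚ) * e k * e (n-k)) else 0) / n.factorial := by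
      intro k hk
      rw [Finset.mem_range] at hk
      by_cases hke : Even k
      · rw [if_pos hke, if_pos hke, hterm n k (by omega)]
      · rw [if_neg hke, if_neg hke, zero_mul, zero_div]
    rw [Finset.sum_congr rfl hRHS, ← Finset.sum_div]
    congr 1
    have := hrec n
    have hcast : ((e (n+1) : ℕ) : ℚ) = ((∑ k ∈ Finset.range (n+1),
        if Even k then (n.choose k) * e k * e (n-k) else 0 : ℕ) : ℚ) := by
      exact_mod_cast congrArg (Nat.cast (R := ℚ)) this
    rw [hcast]
    push_cast
    refine Finset.sum_congr rfl fun k _ => ?_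
    by_cases hke : Even k <;> simp [hke]
  -- parity lemmas
  have hCC : ∀ n, ¬ Even n → (PowerSeries.coeff (R := ℚ) n) (Cs * Cs) = 0 := by
    intro n hn
    rw [PowerSeries.coeff_mul]
    refine Finset.sum_eq_zero fun p hp => ?_
    rw [Finset.HasAntidiagonal.mem_antidiagonal] at hp
    rw [hCs]
    simp only [coeff_mk]
    by_cases h1 : Even p.1
    · have h2 : ¬ Even p.2 := fun h2 => hn (hp ▸ h1.add h2)
      rw [if_neg h2, mul_zero]
    · rw [if_neg h1, zero_mul]
  have hCSe : ∀ n, Even n → (PowerSeries.coeff (R := ℚ) n) (Cs * Ss) = 0 := by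
    intro n hn
    rw [PowerSeries.coeff_mul]
    refine Finset.sum_eq_zero fun p hp => ?_
    rw [Finset.HasAntidiagonal.mem_antidiagonal] at hp
    rw [hCs, hSs]
    simp only [coeff_mk]
    by_cases h1 : Even p.1
    · have h2 : Even p.2 := (Nat.even_add.mp (hp ▸ hn)).mp h1
      rw [if_pos h2, mul_zero]
    · rw [if_neg h1, zero_mul]
  -- derivative of the even part
  have hCS : d⁄dX ℚ Cs = Cs * Ss := by
    ext n
    by_cases hn : Even n
    · rw [coeff_derivative, hCSe n hn, hCs]
      simp only [coeff_mk]
      rw [if_neg (by simp [Nat.even_add_one, hn]), zero_mul]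
    · have h1 : (PowerSeries.coeff (R := ℚ) n) (d⁄dX ℚ Cs) = (PowerSeries.coeff (R := ℚ) n) (d⁄dX ℚ A) := by
        rw [coeff_derivative, coeff_derivative, hCs, hA]
        simp only [coeff_mk]
        rw [if_pos (by simp [Nat.even_add_one, hn])]
      rw [h1, hCA]
      conv_lhs => rw [hsplit]
      rw [mul_add, map_add, hCC n hn, zero_add]
  -- second derivative identity
  have hdd : d⁄dX ℚ (d⁄dX ℚ A) = (d⁄dX ℚ A) * A := by
    rw [hCA, Derivation.leibniz]
    rw [smul_eq_mul, smul_eq_mul, hCS, hCA, hsplit]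
    ring
  -- extract coefficients
  intro M
  have hco := congrArg (PowerSeries.coeff (R := ℚ) M) hdd
  rw [coeff_derivative, coeff_derivative, PowerSeries.coeff_mul,
    Finset.Nat.sum_antidiagonal_eq_sum_range_succ_mk] at hco
  simp only [coeff_derivative, hA, coeff_mk] at hco
  -- hco : a (M+1+1) * (M+1+1) * (M+1) = ∑ i in range (M+1), a (i+1) * (i+1) * a (M-i)
  have hL : a (M+1+1) * ((M:ℚ)+1+1) * ((M:ℚ)+1) = (e (M+2) : ℚ) / M.factorial := by
    rw [ha]
    simp only [Nat.factorial_succ]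
    push_cast
    rw [div_mul_eq_mul_div, div_mul_eq_mul_div, div_eq_div_iff (by positivity) (fact_ne M)]
    ring
  have hR : ∀ i ∈ Finset.range (M+1), a (i+1) * ((i:ℚ)+1) * a (M-i)
      = ((M.choose i : ℚ) * e (i+1) * e (M-i)) / M.factorial := by
    intro i hi
    rw [Finset.mem_range] at hi
    have hiM : i ≤ M := by omega
    have hfac : (M.factorial : ℚ) = (M.choose i : ℚ) * i.factorial * (M-i).factorial := by
      exact_mod_cast (Nat.choose_mul_factorial_mul_factorial hiM).symm
    have h1 : a (i+1) * ((i:ℚ)+1) = (e (i+1):ℚ) / i.factorial := by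
      rw [ha]
      simp only [Nat.factorial_succ]
      push_cast
      rw [div_mul_eq_mul_div, div_eq_div_iff (by positivity) (fact_ne i)]
      ring
    rw [h1]
    rw [show a (M-i) = (e (M-i):ℚ) / (M-i).factorial from rfl]
    rw [div_mul_div_comm, div_eq_div_iff (by positivity) (fact_ne M), hfac]
    ring
  push_cast at hco
  rw [hL] at hco
  rw [Finset.sum_congr rfl hR, ← Finset.sum_div] at hco
  have hfin : (e (M+2) : ℚ) = ∑ i ∈ Finset.range (M+1), (M.choose i : ℚ) * e (i+1) * e (M-i) := by
    have h2 := congrArg (fun x : ℚ => x * M.factorial) hco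
    simp only [div_mul_cancel₀ _ (fact_ne M)] at h2
    exact h2
  exact_mod_cast hfin

end Star


/-! ### trees: basic lemmas -/

namespace PTree

lemma size_node (a : ℕ) (l r : PTree) : (node a l r).size = l.size + r.size + 1 := rfl

lemma labels_node (a : ℕ) (l r : PTree) : (node a l r).labels = insert a (l.labels ∪ r.labels) := rfl

lemma increasing_node {a : ℕ} {l r : PTree} : (node a l r).Increasing ↔
    (∀ b ∈ l.labels, a < b) ∧ (∀ b ∈ r.labels, a < b) ∧ l.Increasing ∧ r.Increasing := Iff.rfl

lemma std_node {a : ℕ} {l r : PTree} : (node a l r).StdOriented ↔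
    (r = nil → l = nil) ∧ (l ≠ nil → r ≠ nil → l.rootLabel < r.rootLabel)
      ∧ l.StdOriented ∧ r.StdOriented := Iff.rfl

lemma labels_eq_empty : ∀ {t : PTree}, t.labels = ∅ ↔ t = nil := by
  intro t
  cases t with
  | nil => simp [labels]
  | node a l r => simp [labels]

lemma card_labels_le_size : ∀ t : PTree, t.labels.card ≤ t.size := by
  intro t
  induction t with
  | nil => simp [labels, size]
  | node a l r ihl ihr =>
    rw [labels_node, size_node]
    calc (insert a (l.labels ∪ r.labels)).card ≤ (l.labels ∪ r.labels).card + 1 :=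
          Finset.card_insert_le _ _
      _ ≤ (l.labels.card + r.labels.card) + 1 := by
          exact Nat.add_le_add_right (Finset.card_union_le _ _) 1
      _ ≤ l.size + r.size + 1 := by omega

lemma root_mem : ∀ {t : PTree}, t ≠ nil → t.rootLabel ∈ t.labels := by
  intro t h
  cases t with
  | nil => exact absurd rfl h
  | node a l r => simp [rootLabel, labels]

lemma root_min {t : PTree} (ht : t.Increasing) (hne : t ≠ nil) :
    ∀ b ∈ t.labels, t.rootLabel ≤ b := by
  cases t with
  | nil => exact absurd rfl hne
  | node a l r =>
    intro b hb
    rw [labels_node, Finset.mem_insert, Finset.mem_union] at hb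
    rcases hb with rfl | hb | hb
    · exact le_refl _
    · exact le_of_lt (ht.1 b hb)
    · exact le_of_lt (ht.2.1 b hb)

end PTree

/-! ### trees on a fixed label set -/

def treesOn (S : Finset ℕ) : Set PTree :=
  {t | t.Increasing ∧ t.StdOriented ∧ t.labels = S ∧ t.size = S.card}

noncomputable def tcount (S : Finset ℕ) : ℕ := (treesOn S).ncard

lemma finite_sized_trees (S : Finset ℕ) :
    ∀ n, {t : PTree | t.size = n ∧ ∀ x ∈ t.labels, x ∈ S}.Finite := by
  intro n
  induction n using Nat.strong_induction_on with
  | _ n ih =>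
    rcases Nat.eq_zero_or_pos n with rfl | hn
    · apply Set.Finite.subset (Set.finite_singleton PTree.nil)
      rintro t ⟨ht, -⟩
      cases t with
      | nil => rfl
      | node a l r => simp [PTree.size_node] at ht
    · have hU : (⋃ k ∈ Finset.range n, {t : PTree | t.size = k ∧ ∀ x ∈ t.labels, x ∈ S}).Finite :=
        Set.Finite.biUnion (Finset.range n).finite_toSet
          (fun k hk => ih k (by simpa using hk))
      apply Set.Finite.subset (Set.Finite.image (fun p : ℕ × PTree × PTree => PTree.node p.1 p.2.1 p.2.2)
        ((S.finite_toSet.prod (hU.prod hU))))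
      rintro t ⟨hsz, hlab⟩
      cases t with
      | nil => simp [PTree.size] at hsz; omega
      | node a l r =>
        refine ⟨(a, l, r), ⟨?_, ?_, ?_⟩, rfl⟩
        · exact hlab a (by simp [PTree.labels_node])
        · simp only [Set.mem_iUnion]
          refine ⟨l.size, by simp [PTree.size_node] at hsz ⊢; omega, rfl, ?_⟩
          intro x hx
          exact hlab x (by simp [PTree.labels_node, Finset.mem_union]; tauto)
        · simp only [Set.mem_iUnion]
          refine ⟨r.size, by simp [PTree.size_node] at hsz ⊢; omega, rfl, ?_⟩
          intro x hx
          exact hlab x (by simp [PTree.labels_node, Finset.mem_union]; tauto)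

lemma treesOn_finite (S : Finset ℕ) : (treesOn S).Finite := by
  apply Set.Finite.subset (finite_sized_trees S S.card)
  rintro t ⟨-, -, hlab, hsz⟩
  exact ⟨hsz, fun x hx => hlab ▸ hx⟩

/-! ### relabeling trees -/

def mapT (f : ℕ → ℕ) : PTree → PTree
  | PTree.nil => PTree.nil
  | PTree.node a l r => PTree.node (f a) (mapT f l) (mapT f r)

lemma mapT_size (f : ℕ → ℕ) : ∀ t, (mapT f t).size = t.size := by
  intro t
  induction t with
  | nil => rfl
  | node a l r ihl ihr => simp [mapT, PTree.size_node, ihl, ihr]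

lemma mapT_labels (f : ℕ → ℕ) : ∀ t, (mapT f t).labels = t.labels.image f := by
  intro t
  induction t with
  | nil => simp [mapT, PTree.labels]
  | node a l r ihl ihr =>
    simp [mapT, PTree.labels_node, ihl, ihr, Finset.image_insert, Finset.image_union]

lemma mapT_nil_iff (f : ℕ → ℕ) : ∀ t, mapT f t = PTree.nil ↔ t = PTree.nil := by
  intro t
  cases t with
  | nil => simp [mapT]
  | node a l r => simp [mapT]

lemma mapT_root (f : ℕ → ℕ) : ∀ t, t ≠ PTree.nil → (mapT f t).rootLabel = f t.rootLabel := by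
  intro t h
  cases t with
  | nil => exact absurd rfl h
  | node a l r => rfl

lemma mapT_increasing {f : ℕ → ℕ} : ∀ {t : PTree},
    (∀ a ∈ t.labels, ∀ b ∈ t.labels, a < b → f a < f b) → t.Increasing → (mapT f t).Increasing := by
  intro t
  induction t with
  | nil => intro _ _; trivial
  | node a l r ihl ihr =>
    intro hf ht
    have hmem : ∀ x ∈ l.labels ∪ r.labels, x ∈ (PTree.node a l r).labels := by
      intro x hx; rw [PTree.labels_node]; exact Finset.mem_insert_of_mem hx
    have hamem : a ∈ (PTree.node a l r).labels := by rw [PTree.labels_node]; simp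
    refine ⟨?_, ?_, ?_, ?_⟩
    · intro b hb
      rw [mapT_labels, Finset.mem_image] at hb
      obtain ⟨x, hx, rfl⟩ := hb
      exact hf a hamem x (hmem x (Finset.mem_union_left _ hx)) (ht.1 x hx)
    · intro b hb
      rw [mapT_labels, Finset.mem_image] at hb
      obtain ⟨x, hx, rfl⟩ := hb
      exact hf a hamem x (hmem x (Finset.mem_union_right _ hx)) (ht.2.1 x hx)
    · exact ihl (fun x hx y hy => hf x (hmem x (Finset.mem_union_left _ hx))
        y (hmem y (Finset.mem_union_left _ hy))) ht.2.2.1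
    · exact ihr (fun x hx y hy => hf x (hmem x (Finset.mem_union_right _ hx))
        y (hmem y (Finset.mem_union_right _ hy))) ht.2.2.2

lemma mapT_std {f : ℕ → ℕ} : ∀ {t : PTree},
    (∀ a ∈ t.labels, ∀ b ∈ t.labels, a < b → f a < f b) → t.StdOriented →
    (mapT f t).StdOriented := by
  intro t
  induction t with
  | nil => intro _ _; trivial
  | node a l r ihl ihr =>
    intro hf ht
    have hmem : ∀ x ∈ l.labels ∪ r.labels, x ∈ (PTree.node a l r).labels := by
      intro x hx; rw [PTree.labels_node]; exact Finset.mem_insert_of_mem hx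
    refine ⟨?_, ?_, ?_, ?_⟩
    · intro hr
      rw [mapT_nil_iff] at hr ⊢
      exact ht.1 hr
    · intro hl hr
      rw [ne_eq, mapT_nil_iff] at hl hr
      rw [mapT_root f l hl, mapT_root f r hr]
      exact hf l.rootLabel (hmem _ (Finset.mem_union_left _ (PTree.root_mem hl)))
        r.rootLabel (hmem _ (Finset.mem_union_right _ (PTree.root_mem hr)))
        (ht.2.1 hl hr)
    · exact ihl (fun x hx y hy => hf x (hmem x (Finset.mem_union_left _ hx))
        y (hmem y (Finset.mem_union_left _ hy))) ht.2.2.1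
    · exact ihr (fun x hx y hy => hf x (hmem x (Finset.mem_union_right _ hx))
        y (hmem y (Finset.mem_union_right _ hy))) ht.2.2.2

lemma mapT_inj {f : ℕ → ℕ} {S : Finset ℕ} (hinj : ∀ a ∈ S, ∀ b ∈ S, f a = f b → a = b) :
    ∀ {t t' : PTree}, (∀ x ∈ t.labels, x ∈ S) → (∀ x ∈ t'.labels, x ∈ S) →
    mapT f t = mapT f t' → t = t' := by
  intro t
  induction t with
  | nil =>
    intro t' _ _ h
    cases t' with
    | nil => rfl
    | node a l r => simp [mapT] at h
  | node a l r ihl ihr =>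
    intro t' hm hm' h
    cases t' with
    | nil => simp [mapT] at h
    | node a' l' r' =>
      simp only [mapT, PTree.node.injEq] at h
      obtain ⟨h1, h2, h3⟩ := h
      have hmm : ∀ x ∈ l.labels ∪ r.labels, x ∈ (PTree.node a l r).labels := by
        intro x hx; rw [PTree.labels_node]; exact Finset.mem_insert_of_mem hx
      have hmm' : ∀ x ∈ l'.labels ∪ r'.labels, x ∈ (PTree.node a' l' r').labels := by
        intro x hx; rw [PTree.labels_node]; exact Finset.mem_insert_of_mem hx
      have ha : a = a' := hinj a (hm a (by rw [PTree.labels_node]; simp))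
        a' (hm' a' (by rw [PTree.labels_node]; simp)) h1
      rw [ha, ihl (fun x hx => hm x (hmm x (Finset.mem_union_left _ hx)))
          (fun x hx => hm' x (hmm' x (Finset.mem_union_left _ hx))) h2,
        ihr (fun x hx => hm x (hmm x (Finset.mem_union_right _ hx)))
          (fun x hx => hm' x (hmm' x (Finset.mem_union_right _ hx))) h3]

lemma tcount_le {S S' : Finset ℕ} (f : ℕ → ℕ)
    (hmaps : ∀ x ∈ S, f x ∈ S') (hinj : ∀ a ∈ S, ∀ b ∈ S, f a = f b → a = b)
    (hsurj : ∀ y ∈ S', ∃ x ∈ S, f x = y)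
    (hmono : ∀ a ∈ S, ∀ b ∈ S, a < b → f a < f b) :
    tcount S ≤ tcount S' := by
  have himg : ∀ x, x ∈ S.image f ↔ x ∈ S' := by
    intro x
    simp only [Finset.mem_image]
    constructor
    · rintro ⟨y, hy, rfl⟩; exact hmaps y hy
    · intro hx; exact hsurj x hx
  have hcards : S.card = S'.card := by
    rw [← Finset.card_image_of_injOn (fun a ha b hb => hinj a ha b hb)]
    congr 1
    exact Finset.ext himg
  have himage : (mapT f) '' (treesOn S) ⊆ treesOn S' := by
    rintro _ ⟨t, ⟨hinc, hstd, hlab, hsz⟩, rfl⟩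
    have hmemS : ∀ x ∈ t.labels, x ∈ S := fun x hx => hlab ▸ hx
    refine ⟨mapT_increasing (fun x hx y hy hxy => hmono x (hmemS x hx) y (hmemS y hy) hxy) hinc,
      mapT_std (fun x hx y hy hxy => hmono x (hmemS x hx) y (hmemS y hy) hxy) hstd, ?_, ?_⟩
    · rw [mapT_labels, hlab]
      exact Finset.ext himg
    · rw [mapT_size, hsz, hcards]
  calc tcount S = ((mapT f) '' (treesOn S)).ncard := by
        refine (Set.ncard_image_of_injOn ?_).symm
        intro t ht t' ht' h
        exact mapT_inj hinj (fun x hx => ht.2.2.1 ▸ hx) (fun x hx => ht'.2.2.1 ▸ hx) h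
    _ ≤ tcount S' := Set.ncard_le_ncard himage (treesOn_finite S')

lemma tcount_eq_of_card_eq {S S' : Finset ℕ} (h : S.card = S'.card) : tcount S = tcount S' := by
  apply le_antisymm
  · exact tcount_le (trf S S' h) (trf_maps h) (trf_inj h) (trf_surj h) (trf_strictMono h)
  · exact tcount_le (trf S' S h.symm) (trf_maps h.symm) (trf_inj h.symm) (trf_surj h.symm)
      (trf_strictMono h.symm)



/-! ### structural decomposition of trees -/

lemma size_pos {t : PTree} (h : t ≠ PTree.nil) : 0 < t.size := by
  cases t with
  | nil => exact absurd rfl h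
  | node a l r => rw [PTree.size_node]; omega

lemma treesOn_node_decomp {S : Finset ℕ} {a : ℕ} {l r : PTree}
    (h : PTree.node a l r ∈ treesOn S) :
    l ∈ treesOn l.labels ∧ r ∈ treesOn r.labels ∧ Disjoint l.labels r.labels ∧
    a ∉ l.labels ∪ r.labels ∧ S = insert a (l.labels ∪ r.labels) := by
  obtain ⟨hinc, hstd, hlab, hsz⟩ := h
  rw [PTree.increasing_node] at hinc
  rw [PTree.std_node] at hstd
  rw [PTree.labels_node] at hlab
  rw [PTree.size_node] at hsz
  have hal : a ∉ l.labels := fun hx => absurd (hinc.1 a hx) (lt_irrefl a)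
  have har : a ∉ r.labels := fun hx => absurd (hinc.2.1 a hx) (lt_irrefl a)
  have haU : a ∉ l.labels ∪ r.labels := by
    rw [Finset.mem_union]; tauto
  have hcard : S.card = (l.labels ∪ r.labels).card + 1 := by
    rw [← hlab, Finset.card_insert_of_notMem haU]
  have hle1 := PTree.card_labels_le_size l
  have hle2 := PTree.card_labels_le_size r
  have hle3 := Finset.card_union_le l.labels r.labels
  have hinter := Finset.card_union_add_card_inter l.labels r.labels
  have hlc : l.labels.card = l.size := by omega
  have hrc : r.labels.card = r.size := by omega
  have hint0 : (l.labels ∩ r.labels).card = 0 := by omega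
  have hdisj : Disjoint l.labels r.labels := by
    rw [Finset.disjoint_iff_inter_eq_empty]
    exact Finset.card_eq_zero.mp hint0
  exact ⟨⟨hinc.2.2.1, hstd.2.2.1, rfl, hlc.symm⟩, ⟨hinc.2.2.2, hstd.2.2.2, rfl, hrc.symm⟩,
    hdisj, haU, hlab.symm⟩

lemma treesOn_root {n : ℕ} (hn : 1 ≤ n) {t : PTree} (h : t ∈ treesOn (Finset.Icc 1 n)) :
    ∃ l r, t = PTree.node 1 l r := by
  cases t with
  | nil =>
    exfalso
    have := h.2.2.1
    rw [show PTree.nil.labels = ∅ from rfl] at this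
    have h1 : (1:ℕ) ∈ Finset.Icc 1 n := by simp [Finset.mem_Icc]; omega
    rw [← this] at h1
    simp at h1
  | node a l r =>
    refine ⟨l, r, ?_⟩
    have hinc := h.1
    rw [PTree.increasing_node] at hinc
    have hlab := h.2.2.1
    rw [PTree.labels_node] at hlab
    have h1 : (1:ℕ) ∈ insert a (l.labels ∪ r.labels) := by
      rw [hlab]; simp [Finset.mem_Icc]; omega
    have ha : a ∈ Finset.Icc 1 n := by
      rw [← hlab]; simp
    rw [Finset.mem_Icc] at ha
    rcases Finset.mem_insert.1 h1 with h1 | h1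
    · rw [← h1]
    · exfalso
      rcases Finset.mem_union.1 h1 with h1 | h1
      · exact absurd (hinc.1 1 h1) (by omega)
      · exact absurd (hinc.2.1 1 h1) (by omega)

/-! ### the recurrence for tree counts -/

lemma tcount_rec (M : ℕ) :
    tcount (Finset.Icc 1 (M+2)) = tcount (Finset.Icc 1 (M+1)) +
      ∑ i ∈ Finset.range M, (M.choose i) * (tcount (Finset.Icc 1 (i+1)) * tcount (Finset.Icc 1 (M-i))) := by
  classical
  set T : Finset ℕ := Finset.Icc 2 (M+2) with hT
  set R : Finset ℕ := Finset.Icc 3 (M+2) with hR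
  have hTcard : T.card = M+1 := by rw [hT, Nat.card_Icc]; omega
  have hRcard : R.card = M := by rw [hR, Nat.card_Icc]; omega
  have hmemT : ∀ x, x ∈ T ↔ 2 ≤ x ∧ x ≤ M+2 := by intro x; rw [hT]; simp [Finset.mem_Icc]
  have hmemR : ∀ x, x ∈ R ↔ 3 ≤ x ∧ x ≤ M+2 := by intro x; rw [hR]; simp [Finset.mem_Icc]
  have hmemI : ∀ x, x ∈ Finset.Icc 1 (M+2) ↔ 1 ≤ x ∧ x ≤ M+2 := by
    intro x; simp [Finset.mem_Icc]
  set F : Finset (Finset ℕ) := R.powerset.filter (fun A => A.card < M) with hF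
  set B0 : Set PTree := (fun r => PTree.node 1 PTree.nil r) '' treesOn T with hB0
  set Blk : Finset ℕ → Set PTree := fun A => (fun p : PTree × PTree => PTree.node 1 p.1 p.2) ''
      ((treesOn (insert 2 A)) ×ˢ (treesOn (T \ insert 2 A))) with hBlk
  have hFmem : ∀ A, A ∈ F ↔ A ⊆ R ∧ A.card < M := by
    intro A; rw [hF, Finset.mem_filter, Finset.mem_powerset]
  -- basic facts for A ∈ F
  have h2R : (2:ℕ) ∉ R := by rw [hmemR]; omega
  have hins_facts : ∀ A : Finset ℕ, A ⊆ R → (2 ∉ A) ∧ insert 2 A ⊆ T ∧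
      (insert 2 A).card = A.card + 1 := by
    intro A hA
    have h2A : 2 ∉ A := fun h => h2R (hA h)
    refine ⟨h2A, ?_, Finset.card_insert_of_notMem h2A⟩
    intro x hx
    rcases Finset.mem_insert.1 hx with rfl | hx
    · rw [hmemT]; omega
    · have := (hmemR x).1 (hA hx); rw [hmemT]; omega
  -- the set identity
  have hset : treesOn (Finset.Icc 1 (M+2)) = B0 ∪ ⋃ A ∈ F, Blk A := by
    ext t
    constructor
    · intro ht
      obtain ⟨l, r, rfl⟩ := treesOn_root (by omega) ht
      obtain ⟨hl, hr, hdisj, hnotin, hSeq⟩ := treesOn_node_decomp ht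
      have hstd := ht.2.1
      rw [PTree.std_node] at hstd
      have hUT : l.labels ∪ r.labels = T := by
        ext x
        constructor
        · intro hx
          have hxI : x ∈ Finset.Icc 1 (M+2) := by
            rw [hSeq]; exact Finset.mem_insert_of_mem hx
          have hx1 : x ≠ 1 := fun h => hnotin (h ▸ hx)
          rw [hmemI] at hxI
          rw [hmemT]; omega
        · intro hx
          rw [hmemT] at hx
          have hxI : x ∈ Finset.Icc 1 (M+2) := by rw [hmemI]; omega
          rw [hSeq] at hxI
          rcases Finset.mem_insert.1 hxI with h | h
          · omega
          · exact h
      have hszt := ht.2.2.2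
      rw [PTree.size_node, card_Icc_one] at hszt
      by_cases hlnil : l = PTree.nil
      · left
        have hlr : r.labels = T := by
          rw [← hUT, hlnil]
          rw [show PTree.nil.labels = ∅ from rfl]
          simp
        exact ⟨r, by rw [← hlr]; exact hr, by rw [hlnil]⟩
      · right
        have hrnil : r ≠ PTree.nil := fun h => hlnil (hstd.1 h)
        have hlmem : ∀ x ∈ l.labels, x ∈ T := fun x hx => hUT ▸ Finset.mem_union_left _ hx
        have hrmem : ∀ x ∈ r.labels, x ∈ T := fun x hx => hUT ▸ Finset.mem_union_right _ hx
        have h2l : 2 ∈ l.labels := by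
          have h2 : (2:ℕ) ∈ l.labels ∪ r.labels := by rw [hUT, hmemT]; omega
          rcases Finset.mem_union.1 h2 with h | h
          · exact h
          · exfalso
            have hrr := PTree.root_min hr.1 hrnil 2 h
            have hrl := (hmemT _).1 (hlmem _ (PTree.root_mem hlnil))
            have := hstd.2.1 hlnil hrnil
            omega
        set A := l.labels.erase 2 with hA
        have hins : insert 2 A = l.labels := Finset.insert_erase h2l
        have hAR : A ⊆ R := by
          intro x hx
          have hx2 := Finset.ne_of_mem_erase hx
          have hxl := Finset.mem_of_mem_erase hx
          have := (hmemT x).1 (hlmem x hxl)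
          rw [hmemR]; omega
        have hlsz : 0 < l.size := size_pos hlnil
        have hrsz : 0 < r.size := size_pos hrnil
        have hlcard : l.labels.card = l.size := hl.2.2.2.symm
        have hAcard : A.card < M := by
          have : A.card = l.labels.card - 1 := by
            rw [hA, Finset.card_erase_of_mem h2l]
          omega
        simp only [Set.mem_iUnion, exists_prop]
        refine ⟨A, (hFmem A).2 ⟨hAR, hAcard⟩, ?_⟩
        rw [hBlk]
        refine ⟨(l, r), ⟨?_, ?_⟩, rfl⟩
        · rw [show ((l,r) : PTree × PTree).1 = l from rfl, hins]; exact hl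
        · have hrT : r.labels = T \ insert 2 A := by
            rw [hins]
            ext x
            rw [Finset.mem_sdiff]
            constructor
            · intro hx
              exact ⟨hrmem x hx, fun hxl => (Finset.disjoint_right.1 hdisj hx) hxl⟩
            · rintro ⟨hxT, hxl⟩
              have : x ∈ l.labels ∪ r.labels := hUT ▸ hxT
              rcases Finset.mem_union.1 this with h | h
              · exact absurd h hxl
              · exact h
          rw [show ((l,r) : PTree × PTree).2 = r from rfl, ← hrT]; exact hr
    · intro ht
      rcases ht with ht | ht
      · obtain ⟨r, hrt, rfl⟩ := ht
        have hrne : r ≠ PTree.nil := by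
          intro h
          have := hrt.2.2.1
          rw [h] at this
          rw [show PTree.nil.labels = ∅ from rfl] at this
          have h2 : (2:ℕ) ∈ T := by rw [hmemT]; omega
          rw [← this] at h2
          simp at h2
        have hrlab := hrt.2.2.1
        refine ⟨?_, ?_, ?_, ?_⟩
        · rw [PTree.increasing_node]
          refine ⟨fun b hb => absurd hb (by simp [PTree.labels]), ?_, trivial, hrt.1⟩
          intro b hb
          have := (hmemT b).1 (hrlab ▸ hb)
          omega
        · rw [PTree.std_node]
          exact ⟨fun _ => rfl, fun h => absurd rfl h, trivial, hrt.2.1⟩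
        · rw [PTree.labels_node, hrlab]
          ext x
          simp only [Finset.mem_insert, Finset.mem_union, hmemI, hmemT,
            show PTree.nil.labels = ∅ from rfl, Finset.notMem_empty, false_or]
          constructor
          · rintro (rfl | h) <;> omega
          · intro h
            rcases Nat.eq_or_lt_of_le h.1 with h1 | h1
            · left; omega
            · right; omega
        · rw [PTree.size_node, card_Icc_one, show PTree.nil.size = 0 from rfl,
            hrt.2.2.2, hTcard]
          omega
      · simp only [Set.mem_iUnion, exists_prop] at ht
        obtain ⟨A, hAF, ht⟩ := ht
        obtain ⟨hAR, hAcard⟩ := (hFmem A).1 hAF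
        obtain ⟨h2A, hinsT, hinscard⟩ := hins_facts A hAR
        rw [hBlk] at ht
        obtain ⟨⟨l, r⟩, ⟨hlm', hrm'⟩, rfl⟩ := ht
        have hlm : l ∈ treesOn (insert 2 A) := hlm'
        have hrm : r ∈ treesOn (T \ insert 2 A) := hrm'
        show PTree.node 1 l r ∈ treesOn (Finset.Icc 1 (M+2))
        have hsdcard : (T \ insert 2 A).card = M - A.card := by
          rw [Finset.card_sdiff_of_subset hinsT, hTcard, hinscard]; omega
        have hlne : l ≠ PTree.nil := by
          intro h
          have := hlm.2.2.1
          rw [h, show PTree.nil.labels = ∅ from rfl] at this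
          have : (2:ℕ) ∈ (∅ : Finset ℕ) := this ▸ Finset.mem_insert_self 2 A
          simp at this
        have hrne : r ≠ PTree.nil := by
          intro h
          have hlab := hrm.2.2.1
          rw [h, show PTree.nil.labels = ∅ from rfl] at hlab
          have : (T \ insert 2 A).card = 0 := by rw [← hlab]; simp
          omega
        have hlmem : ∀ x ∈ l.labels, x ∈ T := fun x hx => hinsT (hlm.2.2.1 ▸ hx)
        have hrmem : ∀ x ∈ r.labels, x ∈ T := fun x hx =>
          (Finset.mem_sdiff.1 (hrm.2.2.1 ▸ hx)).1
        have hrootl : l.rootLabel = 2 := by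
          have h1 := PTree.root_min hlm.1 hlne 2 (hlm.2.2.1 ▸ Finset.mem_insert_self 2 A)
          have h2 := (hmemT _).1 (hlmem _ (PTree.root_mem hlne))
          omega
        have hrootr : 3 ≤ r.rootLabel := by
          have h1 := PTree.root_mem hrne
          have h2 := Finset.mem_sdiff.1 (hrm.2.2.1 ▸ h1)
          have h3 := (hmemT _).1 h2.1
          have h4 : r.rootLabel ≠ 2 := fun h => h2.2 (h ▸ Finset.mem_insert_self 2 A)
          omega
        refine ⟨?_, ?_, ?_, ?_⟩
        · rw [PTree.increasing_node]
          refine ⟨?_, ?_, hlm.1, hrm.1⟩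
          · intro b hb; have := (hmemT b).1 (hlmem b hb); omega
          · intro b hb; have := (hmemT b).1 (hrmem b hb); omega
        · rw [PTree.std_node]
          exact ⟨fun h => absurd h hrne, fun _ _ => by omega, hlm.2.1, hrm.2.1⟩
        · rw [PTree.labels_node, hlm.2.2.1, hrm.2.2.1,
            Finset.union_sdiff_of_subset hinsT]
          ext x
          simp only [Finset.mem_insert, hmemI, hmemT]
          constructor
          · rintro (rfl | h) <;> omega
          · intro h
            rcases Nat.eq_or_lt_of_le h.1 with h1 | h1
            · left; omega
            · right; omega
        · rw [PTree.size_node, card_Icc_one, hlm.2.2.2, hrm.2.2.2, hinscard, hsdcard]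
          omega
  -- finiteness of the blocks
  have hB0fin : B0.Finite := (treesOn_finite T).image _
  have hBlkfin : ∀ A, (Blk A).Finite := fun A =>
    (((treesOn_finite (insert 2 A)).prod (treesOn_finite (T \ insert 2 A)))).image _
  -- disjointness
  have hdisj0 : ∀ A ∈ F, Disjoint B0 (Blk A) := by
    intro A hAF
    rw [Set.disjoint_left]
    rintro _ ⟨r, hrt, rfl⟩ hblk
    rw [hBlk] at hblk
    obtain ⟨⟨l', r'⟩, ⟨hl', hr'⟩, heq⟩ := hblk
    simp only [PTree.node.injEq] at heq
    have hlab : l'.labels = insert 2 A := hl'.2.2.1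
    rw [heq.2.1, show PTree.nil.labels = ∅ from rfl] at hlab
    exact Finset.notMem_empty 2 (by rw [hlab]; exact Finset.mem_insert_self 2 A)
  have hdisjB : ∀ A ∈ F, ∀ A' ∈ F, A ≠ A' → Disjoint (Blk A) (Blk A') := by
    intro A hAF A' hAF' hne
    rw [Set.disjoint_left]
    rintro _ hblk hblk'
    rw [hBlk] at hblk hblk'
    obtain ⟨⟨l, r⟩, ⟨hl, hr⟩, heq⟩ := hblk
    obtain ⟨⟨l', r'⟩, ⟨hl', hr'⟩, heq'⟩ := hblk'
    rw [← heq'] at heq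
    simp only [PTree.node.injEq] at heq
    have hll : l.labels = insert 2 A := hl.2.2.1
    have hll' : l'.labels = insert 2 A' := hl'.2.2.1
    have hlabs : insert 2 A = insert 2 A' := by
      rw [← hll, ← hll', heq.2.1]
    have h2A := (hins_facts A ((hFmem A).1 hAF).1).1
    have h2A' := (hins_facts A' ((hFmem A').1 hAF').1).1
    apply hne
    rw [← Finset.erase_insert h2A, ← Finset.erase_insert h2A', hlabs]
  -- cardinalities of the blocks
  have hB0card : B0.ncard = tcount (Finset.Icc 1 (M+1)) := by
    rw [hB0]
    rw [Set.ncard_image_of_injOn (by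
      rintro r hr r' hr' heq
      simpa [PTree.node.injEq] using heq)]
    exact tcount_eq_of_card_eq (by rw [hTcard, card_Icc_one])
  have hBlkcard : ∀ A ∈ F, (Blk A).ncard =
      tcount (Finset.Icc 1 (A.card + 1)) * tcount (Finset.Icc 1 (M - A.card)) := by
    intro A hAF
    obtain ⟨hAR, hAcard⟩ := (hFmem A).1 hAF
    obtain ⟨h2A, hinsT, hinscard⟩ := hins_facts A hAR
    rw [hBlk]
    rw [Set.ncard_image_of_injOn (by
      rintro ⟨l, r⟩ hm ⟨l', r'⟩ hm' heq
      simp only [PTree.node.injEq] at heq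
      exact Prod.ext heq.2.1 heq.2.2)]
    rw [ncard_prod _ _ (treesOn_finite _) (treesOn_finite _)]
    congr 1
    · exact tcount_eq_of_card_eq (by rw [hinscard, card_Icc_one])
    · refine tcount_eq_of_card_eq (by
        rw [Finset.card_sdiff_of_subset hinsT, hTcard, hinscard, card_Icc_one]
        omega)
  -- assemble
  rw [tcount, hset, Set.ncard_union_eq ?hd hB0fin ?hf]
  case hd =>
    exact Set.disjoint_iUnion₂_right.mpr fun A hA => hdisj0 A hA
  case hf =>
    rw [← Finset.set_biUnion_coe]
    exact Set.Finite.biUnion F.finite_toSet (fun A _ => hBlkfin A)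
  rw [hB0card, ncard_biUnion F Blk (fun A _ => hBlkfin A) hdisjB]
  congr 1
  rw [Finset.sum_congr rfl hBlkcard]
  have hfn : ∀ A ∈ R.powerset, (if A.card < M then
      tcount (Finset.Icc 1 (A.card + 1)) * tcount (Finset.Icc 1 (M - A.card)) else 0)
      = (fun k => if k < M then tcount (Finset.Icc 1 (k+1)) * tcount (Finset.Icc 1 (M-k)) else 0) A.card :=
    fun A _ => rfl
  rw [hF, Finset.sum_filter, Finset.sum_congr rfl hfn, Finset.sum_powerset, hRcard]
  have hpc : ∀ j ∈ Finset.range (M+1), (∑ A ∈ Finset.powersetCard j R,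
      (fun k => if k < M then tcount (Finset.Icc 1 (k+1)) * tcount (Finset.Icc 1 (M-k)) else 0) A.card)
      = M.choose j • (if j < M then tcount (Finset.Icc 1 (j+1)) * tcount (Finset.Icc 1 (M-j)) else 0) := by
    intro j hj
    rw [Finset.sum_powersetCard j R (fun k => if k < M then
      tcount (Finset.Icc 1 (k+1)) * tcount (Finset.Icc 1 (M-k)) else 0), hRcard]
  rw [Finset.sum_congr rfl hpc, Finset.sum_range_succ, if_neg (lt_irrefl M), smul_zero, add_zero]
  refine Finset.sum_congr rfl fun j hj => ?_
  rw [Finset.mem_range] at hj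
  rw [if_pos hj, smul_eq_mul]



/-! ### base cases -/

lemma size_eq_zero {t : PTree} (h : t.size = 0) : t = PTree.nil := by
  cases t with
  | nil => rfl
  | node a l r => rw [PTree.size_node] at h; omega

lemma tcount_zero : tcount (Finset.Icc 1 0) = 1 := by
  have h0 : Finset.Icc 1 0 = (∅ : Finset ℕ) := by
    apply Finset.Icc_eq_empty; omega
  have : treesOn (Finset.Icc 1 0) = {PTree.nil} := by
    ext t
    constructor
    · rintro ⟨-, -, hlab, -⟩
      exact PTree.labels_eq_empty.1 (by rw [hlab, h0])
    · rintro rfl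
      exact ⟨trivial, trivial, by rw [h0]; rfl, by rw [h0]; rfl⟩
  rw [tcount, this, Set.ncard_singleton]

lemma tcount_one : tcount (Finset.Icc 1 1) = 1 := by
  have h1 : Finset.Icc 1 1 = ({1} : Finset ℕ) := Finset.Icc_self 1
  have : treesOn (Finset.Icc 1 1) = {PTree.node 1 PTree.nil PTree.nil} := by
    ext t
    constructor
    · intro ht
      obtain ⟨l, r, rfl⟩ := treesOn_root (le_refl 1) ht
      have hsz := ht.2.2.2
      rw [PTree.size_node, card_Icc_one] at hsz
      have hl : l = PTree.nil := size_eq_zero (by omega)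
      have hr : r = PTree.nil := size_eq_zero (by omega)
      rw [hl, hr]
      rfl
    · rintro rfl
      refine ⟨?_, ?_, ?_, ?_⟩
      · exact ⟨fun b hb => absurd hb (by simp [PTree.labels]),
          fun b hb => absurd hb (by simp [PTree.labels]), trivial, trivial⟩
      · exact ⟨fun _ => rfl, fun h => absurd rfl h, trivial, trivial⟩
      · rw [PTree.labels_node, h1]
        simp [PTree.labels]
      · rw [PTree.size_node, card_Icc_one]
        rfl
  rw [tcount, this, Set.ncard_singleton]

/-! ### the master count identity -/

lemma tcount_eq_udCount : ∀ m, tcount (Finset.Icc 1 m) = udCount (Finset.Icc 1 m) := by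
  intro m
  induction m using Nat.strong_induction_on with
  | _ m ih =>
    match m with
    | 0 => rw [tcount_zero, udCount_zero]
    | 1 =>
      rw [tcount_one, udCount_rec 0, Finset.sum_range_one, if_pos Even.zero,
        Nat.choose_self, one_mul, Nat.sub_self, udCount_zero, mul_one]
    | (M+2) =>
      rw [tcount_rec M]
      have hstar := star_of_rec (fun k => udCount (Finset.Icc 1 k)) udCount_zero
        (fun n => udCount_rec n) M
      rw [Finset.sum_range_succ, Nat.choose_self, Nat.sub_self, udCount_zero,
        one_mul, mul_one] at hstar
      rw [ih (M+1) (by omega)]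
      have hc : ∀ i ∈ Finset.range M,
          M.choose i * (tcount (Finset.Icc 1 (i+1)) * tcount (Finset.Icc 1 (M-i)))
          = M.choose i * (udCount (Finset.Icc 1 (i+1)) * udCount (Finset.Icc 1 (M-i))) := by
        intro i hi
        rw [Finset.mem_range] at hi
        rw [ih (i+1) (by omega), ih (M-i) (by omega)]
      rw [Finset.sum_congr rfl hc, hstar]
      have hc2 : ∀ i ∈ Finset.range M,
          M.choose i * udCount (Finset.Icc 1 (i+1)) * udCount (Finset.Icc 1 (M-i))
          = M.choose i * (udCount (Finset.Icc 1 (i+1)) * udCount (Finset.Icc 1 (M-i))) := by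
        intro i _; rw [mul_assoc]
      rw [Finset.sum_congr rfl hc2, Nat.add_comm]

/-! ### Euler numbers as udCounts -/

lemma eulerNumber_eq_udCount (k : ℕ) : eulerNumber k = udCount (Finset.Icc 1 k) := by
  rw [eulerNumber, udCount]
  congr 1
  ext l
  simp only [Set.mem_setOf_eq]
  constructor
  · rintro ⟨hp, hud⟩
    refine ⟨⟨?_, ?_⟩, hud⟩
    · exact hp.nodup_iff.mpr (List.nodup_range' 1)
    · ext x
      rw [List.mem_toFinset, hp.mem_iff, List.mem_range'_1, Finset.mem_Icc]
      omega
  · rintro ⟨⟨hnd, htf⟩, hud⟩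
    refine ⟨?_, hud⟩
    apply List.perm_of_nodup_nodup_toFinset_eq hnd (List.nodup_range' 1)
    rw [htf]
    ext x
    rw [List.mem_toFinset, List.mem_range'_1, Finset.mem_Icc]
    omega

/-! ### min-path lemmas -/

lemma minPathLen_pos {t : PTree} (h : t ≠ PTree.nil) : 1 ≤ t.minPathLen := by
  cases t with
  | nil => exact absurd rfl h
  | node a l r =>
    cases l <;> cases r <;> simp [PTree.minPathLen] <;> split <;> omega

lemma minPathLen_eq_one {t : PTree} (h : t.minPathLen = 1) :
    ∃ b, t = PTree.node b PTree.nil PTree.nil := by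
  cases t with
  | nil => simp [PTree.minPathLen] at h
  | node a l r =>
    cases l with
    | nil =>
      cases r with
      | nil => exact ⟨a, rfl⟩
      | node c rl rr =>
        exfalso
        rw [show (PTree.node a PTree.nil (PTree.node c rl rr)).minPathLen
          = 1 + (PTree.node c rl rr).minPathLen from rfl] at h
        have := minPathLen_pos (t := PTree.node c rl rr) (by simp)
        omega
    | node b ll lr =>
      cases r with
      | nil =>
        exfalso
        rw [show (PTree.node a (PTree.node b ll lr) PTree.nil).minPathLen
          = 1 + (PTree.node b ll lr).minPathLen from rfl] at h
        have := minPathLen_pos (t := PTree.node b ll lr) (by simp)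
        omega
      | node c rl rr =>
        exfalso
        rw [show (PTree.node a (PTree.node b ll lr) (PTree.node c rl rr)).minPathLen
          = 1 + (if (PTree.node b ll lr).rootLabel ≤ (PTree.node c rl rr).rootLabel
            then (PTree.node b ll lr).minPathLen else (PTree.node c rl rr).minPathLen) from rfl] at h
        have h1 := minPathLen_pos (t := PTree.node b ll lr) (by simp)
        have h2 := minPathLen_pos (t := PTree.node c rl rr) (by simp)
        split at h <;> omega



/-! ### the min-path reduction -/

lemma isbit_iff (n : ℕ) (t : PTree) :
    (PTree.IsBIT n t ∧ t.StdOriented) ↔ t ∈ treesOn (Finset.Icc 1 n) := by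
  constructor
  · rintro ⟨⟨hinc, hsz, hlab⟩, hstd⟩
    exact ⟨hinc, hstd, hlab, by rw [card_Icc_one]; exact hsz⟩
  · rintro ⟨hinc, hstd, hlab, hsz⟩
    exact ⟨⟨hinc, by rw [card_Icc_one] at hsz; exact hsz, hlab⟩, hstd⟩

lemma minpath_two_set :
    {t : PTree | PTree.IsBIT 2 t ∧ t.StdOriented ∧ t.minPathLen = 2}
      = {PTree.node 1 PTree.nil (PTree.node 2 PTree.nil PTree.nil)} := by
  ext t
  simp only [Set.mem_setOf_eq, Set.mem_singleton_iff]
  constructor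
  · rintro ⟨hbit, hstd, hmp⟩
    have ht : t ∈ treesOn (Finset.Icc 1 2) := (isbit_iff 2 t).1 ⟨hbit, hstd⟩
    obtain ⟨l, r, rfl⟩ := treesOn_root (by omega) ht
    have hsz := ht.2.2.2
    rw [PTree.size_node, card_Icc_one] at hsz
    have hstd' := ht.2.1
    rw [PTree.std_node] at hstd'
    have hlnil : l = PTree.nil := by
      by_contra hl
      have hr : r = PTree.nil := size_eq_zero (by have := size_pos hl; omega)
      exact hl (hstd'.1 hr)
    subst hlnil
    have hrsize : r.size = 1 := by
      rw [show PTree.nil.size = 0 from rfl] at hsz; omega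
    obtain ⟨b, rfl⟩ : ∃ b, r = PTree.node b PTree.nil PTree.nil := by
      cases r with
      | nil => simp [PTree.size] at hrsize
      | node c rl rr =>
        rw [PTree.size_node] at hrsize
        have h1 : rl = PTree.nil := size_eq_zero (by omega)
        have h2 : rr = PTree.nil := size_eq_zero (by omega)
        exact ⟨c, by rw [h1, h2]⟩
    have hlab := ht.2.2.1
    rw [PTree.labels_node] at hlab
    have hb : b ∈ Finset.Icc 1 2 := by
      rw [← hlab]
      refine Finset.mem_insert_of_mem (Finset.mem_union_right _ ?_)
      rw [PTree.labels_node]; simp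
    have hinc := ht.1
    rw [PTree.increasing_node] at hinc
    have h1b : 1 < b := hinc.2.1 b (by rw [PTree.labels_node]; simp)
    have hb2 : b = 2 := by rw [Finset.mem_Icc] at hb; omega
    rw [hb2]
  · rintro rfl
    refine ⟨⟨?_, rfl, ?_⟩, ?_, rfl⟩
    · exact ⟨fun b hb => absurd hb (by simp [PTree.labels]),
        fun b hb => by simp [PTree.labels] at hb; omega,
        trivial,
        ⟨fun b hb => absurd hb (by simp [PTree.labels]),
         fun b hb => absurd hb (by simp [PTree.labels]), trivial, trivial⟩⟩
    · rw [PTree.labels_node]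
      ext x
      simp [PTree.labels, Finset.mem_Icc]
      omega
    · exact ⟨fun h => absurd h (by simp), fun h => absurd rfl h, trivial,
        ⟨fun _ => rfl, fun h => absurd rfl h, trivial, trivial⟩⟩

lemma minpath_set_eq {n : ℕ} (hn : 3 ≤ n) :
    {t : PTree | PTree.IsBIT n t ∧ t.StdOriented ∧ t.minPathLen = 2}
      = (fun r => PTree.node 1 (PTree.node 2 PTree.nil PTree.nil) r) '' treesOn (Finset.Icc 3 n) := by
  ext t
  simp only [Set.mem_setOf_eq, Set.mem_image]
  constructor
  · rintro ⟨hbit, hstd, hmp⟩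
    have ht : t ∈ treesOn (Finset.Icc 1 n) := (isbit_iff n t).1 ⟨hbit, hstd⟩
    obtain ⟨l, r, rfl⟩ := treesOn_root (by omega) ht
    obtain ⟨hl, hr, hdisj, hnotin, hSeq⟩ := treesOn_node_decomp ht
    have hstd' := ht.2.1
    rw [PTree.std_node] at hstd'
    have hsz := ht.2.2.2
    rw [PTree.size_node, card_Icc_one] at hsz
    have hlnil : l ≠ PTree.nil := by
      intro hln
      subst hln
      cases r with
      | nil =>
        rw [show PTree.nil.size = 0 from rfl] at hsz; omega
      | node c rl rr =>
        rw [show (PTree.node 1 PTree.nil (PTree.node c rl rr)).minPathLen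
          = 1 + (PTree.node c rl rr).minPathLen from rfl] at hmp
        obtain ⟨b, hb⟩ := minPathLen_eq_one (t := PTree.node c rl rr) (by omega)
        rw [hb] at hsz
        rw [show PTree.nil.size = 0 from rfl,
          show (PTree.node b PTree.nil PTree.nil).size = 1 from rfl] at hsz
        omega
    have hrnil : r ≠ PTree.nil := fun h => hlnil (hstd'.1 h)
    have hlmp : l.minPathLen = 1 := by
      cases l with
      | nil => exact absurd rfl hlnil
      | node lb ll lr =>
        cases r with
        | nil => exact absurd rfl hrnil
        | node rb rl rr =>
          rw [show (PTree.node 1 (PTree.node lb ll lr) (PTree.node rb rl rr)).minPathLen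
            = 1 + (if (PTree.node lb ll lr).rootLabel ≤ (PTree.node rb rl rr).rootLabel
              then (PTree.node lb ll lr).minPathLen
              else (PTree.node rb rl rr).minPathLen) from rfl,
            if_pos (le_of_lt (hstd'.2.1 (by simp) (by simp)))] at hmp
          omega
    obtain ⟨b, rfl⟩ := minPathLen_eq_one hlmp
    have hblab : (PTree.node b PTree.nil PTree.nil).labels = {b} := by
      simp [PTree.labels]
    have hUT : (PTree.node b PTree.nil PTree.nil).labels ∪ r.labels = Finset.Icc 2 n := by
      ext x
      constructor
      · intro hx
        have hxI : x ∈ Finset.Icc 1 n := by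
          rw [hSeq]; exact Finset.mem_insert_of_mem hx
        have hx1 : x ≠ 1 := fun h => hnotin (h ▸ hx)
        rw [Finset.mem_Icc] at hxI ⊢
        omega
      · intro hx
        rw [Finset.mem_Icc] at hx
        have hxI : x ∈ Finset.Icc 1 n := by rw [Finset.mem_Icc]; omega
        rw [hSeq] at hxI
        rcases Finset.mem_insert.1 hxI with h | h
        · omega
        · exact h
    have hb2 : b = 2 := by
      have h2 : (2:ℕ) ∈ (PTree.node b PTree.nil PTree.nil).labels ∪ r.labels := by
        rw [hUT, Finset.mem_Icc]; omega
      rcases Finset.mem_union.1 h2 with h | h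
      · rw [hblab, Finset.mem_singleton] at h; omega
      · exfalso
        have hrr := PTree.root_min hr.1 hrnil 2 h
        have hbI : b ∈ Finset.Icc 2 n := by
          rw [← hUT]
          exact Finset.mem_union_left _ (by rw [hblab]; simp)
        rw [Finset.mem_Icc] at hbI
        have hlt := hstd'.2.1 (by simp) hrnil
        rw [show (PTree.node b PTree.nil PTree.nil).rootLabel = b from rfl] at hlt
        omega
    subst hb2
    have hrlab : r.labels = Finset.Icc 3 n := by
      ext x
      constructor
      · intro hx
        have hxT : x ∈ Finset.Icc 2 n := by
          rw [← hUT]; exact Finset.mem_union_right _ hx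
        have hx2 : x ≠ 2 := by
          intro h
          have h2l : x ∈ (PTree.node 2 PTree.nil PTree.nil).labels := by
            rw [hblab, h]; simp
          exact (Finset.disjoint_left.1 hdisj h2l) hx
        rw [Finset.mem_Icc] at hxT ⊢
        omega
      · intro hx
        rw [Finset.mem_Icc] at hx
        have hxT : x ∈ Finset.Icc 2 n := by rw [Finset.mem_Icc]; omega
        rw [← hUT] at hxT
        rcases Finset.mem_union.1 hxT with h | h
        · rw [hblab] at h
          simp at h
          omega
        · exact h
    exact ⟨r, by rw [← hrlab]; exact hr, rfl⟩
  · rintro ⟨r, hrt, rfl⟩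
    have hrlab := hrt.2.2.1
    have hrne : r ≠ PTree.nil := by
      intro h
      rw [h, show PTree.nil.labels = ∅ from rfl] at hrlab
      have h3 : (3:ℕ) ∈ Finset.Icc 3 n := by rw [Finset.mem_Icc]; omega
      rw [← hrlab] at h3
      simp at h3
    have hrsz : r.size = n - 2 := by
      rw [hrt.2.2.2, Nat.card_Icc]
      omega
    have hrootr : 3 ≤ r.rootLabel := by
      have h1 := PTree.root_mem hrne
      rw [hrlab, Finset.mem_Icc] at h1
      omega
    refine ⟨⟨?_, ?_, ?_⟩, ?_, ?_⟩
    · refine ⟨?_, ?_, ?_, hrt.1⟩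
      · intro x hx
        simp [PTree.labels] at hx
        omega
      · intro x hx
        have : x ∈ Finset.Icc 3 n := hrlab ▸ hx
        rw [Finset.mem_Icc] at this
        omega
      · exact ⟨fun x hx => absurd hx (by simp [PTree.labels]),
          fun x hx => absurd hx (by simp [PTree.labels]), trivial, trivial⟩
    · rw [PTree.size_node, show (PTree.node 2 PTree.nil PTree.nil).size = 1 from rfl, hrsz]
      omega
    · rw [PTree.labels_node, hrlab,
        show (PTree.node 2 PTree.nil PTree.nil).labels = {2} from by simp [PTree.labels]]
      ext x
      simp [Finset.mem_Icc]
      omega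
    · refine ⟨fun h => absurd h hrne, fun _ _ => ?_, ⟨fun _ => rfl, fun h => absurd rfl h,
        trivial, trivial⟩, hrt.2.1⟩
      rw [show (PTree.node 2 PTree.nil PTree.nil).rootLabel = 2 from rfl]
      omega
    · cases r with
      | nil => exact absurd rfl hrne
      | node c rl rr =>
        rw [show (PTree.node 1 (PTree.node 2 PTree.nil PTree.nil) (PTree.node c rl rr)).minPathLen
          = 1 + (if (PTree.node 2 PTree.nil PTree.nil).rootLabel ≤ (PTree.node c rl rr).rootLabel
            then (PTree.node 2 PTree.nil PTree.nil).minPathLen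
            else (PTree.node c rl rr).minPathLen) from rfl,
          if_pos (by rw [show (PTree.node 2 PTree.nil PTree.nil).rootLabel = 2 from rfl]; omega)]
        rfl


/-- the number of binary increasing trees of size n whose min-path
has exactly 2 nodes is the (n-1)-st Euler number e_{n-1}
(paper indexing: e₁ = e₂ = e₃ = 1, e₄ = 2, e₅ = 5, e₆ = 16, …). -/
theorem minPath_two_count (n : ℕ) (hn : 2 ≤ n) :
    minPathCount n 2 = paperEuler (n - 1) := by
  have hpe : paperEuler (n - 1) = eulerNumber (n - 2) := by
    have h12 : n - 1 - 1 = n - 2 := by omega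
    rw [paperEuler, h12]
  rcases eq_or_lt_of_le hn with h2 | h3
  · -- n = 2
    subst h2
    rw [minPathCount, minpath_two_set, Set.ncard_singleton, hpe,
      show (2:ℕ) - 2 = 0 from rfl, eulerNumber_eq_udCount, udCount_zero]
  · -- 3 ≤ n
    rw [minPathCount, minpath_set_eq (by omega), hpe, eulerNumber_eq_udCount]
    rw [Set.ncard_image_of_injOn (by
      rintro r hr r' hr' heq
      simpa [PTree.node.injEq] using heq)]
    rw [show (treesOn (Finset.Icc 3 n)).ncard = tcount (Finset.Icc 3 n) from rfl]
    rw [tcount_eq_of_card_eq (show (Finset.Icc 3 n).card = (Finset.Icc 1 (n-2)).card by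
      rw [Nat.card_Icc, card_Icc_one]; omega)]
    exact tcount_eq_udCount (n-2)

end Andre
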